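/- arXiv:1908.03040 — 6 statements merged into one kernel-verified Lean document; each statement's English description precedes it below -/
import Mathlib

section
/- Let l be a natural number and let z ∈ ℂ with Im z ≠ 0. Then Σ_{k=0}^{l} (l−k+1)·(k+1)·z^{−(l−k+2)}·z̄^{−(k+2)} = 2·(u − ū)/(|z|⁴·(z−z̄)³), where u = (z̄²/z^{l})·(z + (l+1)·(z−z̄)/2) and ū denotes its complex conjugate; equivalently the left-hand side equals (4/(|z|⁴(z−z̄)³))·Im(u)·i. -/
open Complex

lemma weighted_sum_z_conj_aux_g (m : ℕ) (z w : ℂ) :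
    (∑ k ∈ Finset.range (m+1), ((k:ℂ)+1) * z^k * w^(m-k)) * (z-w)^2
      = ((m:ℂ)+1)*z^(m+2) - ((m:ℂ)+2)*z^(m+1)*w + w^(m+2) := by
  induction m with
  | zero => simp; ring
  | succ n ih =>
    rw [Finset.sum_range_succ]
    have h1 : ∀ k ∈ Finset.range (n+1), ((k:ℂ)+1) * z^k * w^(n+1-k)
        = (((k:ℂ)+1) * z^k * w^(n-k)) * w := by
      intro k hk
      rw [Finset.mem_range] at hk
      rw [show n+1-k = (n-k)+1 from by omega, pow_succ]
      ring
    rw [Finset.sum_congr rfl h1, ← Finset.sum_mul, Nat.sub_self, pow_zero]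
    push_cast
    linear_combination w * ih

lemma weighted_sum_z_conj_aux_f (l : ℕ) (z w : ℂ) :
    (∑ k ∈ Finset.range (l+1), ((l:ℂ)-(k:ℂ)+1) * ((k:ℂ)+1) * z^k * w^(l-k)) * (z-w)^3
      = 2*w^(l+2)*(z + ((l:ℂ)+1)*(z-w)/2) - 2*z^(l+2)*(w + ((l:ℂ)+1)*(w-z)/2) := by
  induction l with
  | zero => simp; ring
  | succ n ih =>
    have key : ∀ k ∈ Finset.range (n+2),
        (((n+1:ℕ):ℂ)-(k:ℂ)+1)*((k:ℂ)+1)*z^k*w^(n+1-k)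
          = ((n:ℂ)-(k:ℂ)+1)*((k:ℂ)+1)*z^k*w^(n+1-k) + (((k:ℂ)+1)*z^k*w^(n+1-k)) := by
      intro k _
      push_cast
      ring
    rw [Finset.sum_congr rfl key, Finset.sum_add_distrib]
    have h2 : (∑ k ∈ Finset.range (n+2), ((n:ℂ)-(k:ℂ)+1)*((k:ℂ)+1)*z^k*w^(n+1-k))
        = w * (∑ k ∈ Finset.range (n+1), ((n:ℂ)-(k:ℂ)+1)*((k:ℂ)+1)*z^k*w^(n-k)) := by
      rw [Finset.sum_range_succ]
      have h3 : ∀ k ∈ Finset.range (n+1), ((n:ℂ)-(k:ℂ)+1)*((k:ℂ)+1)*z^k*w^(n+1-k)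
          = w * (((n:ℂ)-(k:ℂ)+1)*((k:ℂ)+1)*z^k*w^(n-k)) := by
        intro k hk
        rw [Finset.mem_range] at hk
        rw [show n+1-k = (n-k)+1 from by omega, pow_succ]
        ring
      rw [Finset.sum_congr rfl h3, ← Finset.mul_sum]
      push_cast
      ring
    rw [h2]
    have hg := weighted_sum_z_conj_aux_g (n+1) z w
    push_cast at hg ⊢
    linear_combination w * ih + (z-w) * hg

/-- Explicit evaluation of the sum
`Σ_{k=0}^{l} (l−k+1)(k+1)·z^{−(l−k+2)}·z̄^{−(k+2)}` appearing in the computation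
of the Cauchy–Szegő kernel, where `z` is a complex number with nonzero
imaginary part.  With `u = (z̄²/z^l)·(z + (l+1)(z−z̄)/2)`, the sum equals
`2(u − ū)/(|z|⁴(z−z̄)³)`, and equivalently `(4/(|z|⁴(z−z̄)³))·Im(u)·i`. -/
theorem weighted_sum_z_conj (l : ℕ) (z : ℂ) (hz : z.im ≠ 0) :
    (∑ k ∈ Finset.range (l + 1), ((l - k + 1 : ℕ) : ℂ) * ((k : ℂ) + 1)
        * z ^ (-((l : ℤ) - (k : ℤ) + 2)) * (starRingEnd ℂ z) ^ (-((k : ℤ) + 2)) =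
      2 * ((starRingEnd ℂ z) ^ 2 / z ^ l * (z + ((l : ℂ) + 1) * (z - starRingEnd ℂ z) / 2)
          - starRingEnd ℂ ((starRingEnd ℂ z) ^ 2 / z ^ l
              * (z + ((l : ℂ) + 1) * (z - starRingEnd ℂ z) / 2)))
        / (((‖z‖ : ℂ)) ^ 4 * (z - starRingEnd ℂ z) ^ 3))
    ∧
    (∑ k ∈ Finset.range (l + 1), ((l - k + 1 : ℕ) : ℂ) * ((k : ℂ) + 1)
        * z ^ (-((l : ℤ) - (k : ℤ) + 2)) * (starRingEnd ℂ z) ^ (-((k : ℤ) + 2)) =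
      4 / (((‖z‖ : ℂ)) ^ 4 * (z - starRingEnd ℂ z) ^ 3)
        * (((starRingEnd ℂ z) ^ 2 / z ^ l
            * (z + ((l : ℂ) + 1) * (z - starRingEnd ℂ z) / 2)).im : ℂ) * Complex.I) := by
  have hz0 : z ≠ 0 := fun h => hz (by simp [h])
  have hw0 : starRingEnd ℂ z ≠ 0 := by simpa using hz0
  have hzw : z - starRingEnd ℂ z ≠ 0 := by
    rw [Complex.sub_conj]
    simp [Complex.ext_iff, hz]
  have h1 : (∑ k ∈ Finset.range (l + 1), ((l - k + 1 : ℕ) : ℂ) * ((k : ℂ) + 1)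
        * z ^ (-((l : ℤ) - (k : ℤ) + 2)) * (starRingEnd ℂ z) ^ (-((k : ℤ) + 2)) =
      2 * ((starRingEnd ℂ z) ^ 2 / z ^ l * (z + ((l : ℂ) + 1) * (z - starRingEnd ℂ z) / 2)
          - starRingEnd ℂ ((starRingEnd ℂ z) ^ 2 / z ^ l
              * (z + ((l : ℂ) + 1) * (z - starRingEnd ℂ z) / 2)))
        / (((‖z‖ : ℂ)) ^ 4 * (z - starRingEnd ℂ z) ^ 3)) := by
    set w := starRingEnd ℂ z with hw
    have hconj : starRingEnd ℂ (w ^ 2 / z ^ l * (z + ((l : ℂ) + 1) * (z - w) / 2))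
        = z ^ 2 / w ^ l * (w + ((l : ℂ) + 1) * (w - z) / 2) := by
      simp only [hw, map_mul, map_div₀, map_pow, map_add, map_sub, Complex.conj_conj,
        map_one, map_natCast, map_ofNat]
    have habs : ((‖z‖ : ℂ)) ^ 4 = (z * w)^2 := by
      rw [hw, Complex.mul_conj]
      norm_cast
      rw [← Complex.sq_norm]
      ring
    have hterm : ∀ k ∈ Finset.range (l+1),
        ((l - k + 1 : ℕ) : ℂ) * ((k : ℂ) + 1) * z ^ (-((l : ℤ) - (k : ℤ) + 2)) * w ^ (-((k : ℤ) + 2))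
        = (((l:ℂ)-(k:ℂ)+1) * ((k:ℂ)+1) * z^k * w^(l-k)) / (z^(l+2) * w^(l+2)) := by
      intro k hk
      rw [Finset.mem_range] at hk
      have hk' : k ≤ l := by omega
      have e1 : (-((l : ℤ) - (k : ℤ) + 2)) = (k:ℤ) - ((l+2 : ℕ) : ℤ) := by push_cast; ring
      have e2 : (-((k : ℤ) + 2)) = ((l-k : ℕ) : ℤ) - ((l+2 : ℕ) : ℤ) := by
        push_cast [Nat.cast_sub hk']; ring
      rw [e1, e2, zpow_sub₀ hz0, zpow_sub₀ hw0, zpow_natCast, zpow_natCast, zpow_natCast,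
        zpow_natCast]
      push_cast [Nat.cast_sub hk']
      ring
    rw [Finset.sum_congr rfl hterm, ← Finset.sum_div, hconj, habs]
    have hf := weighted_sum_z_conj_aux_f l z w
    rw [div_eq_div_iff (mul_ne_zero (pow_ne_zero _ hz0) (pow_ne_zero _ hw0)) (by
      exact mul_ne_zero (pow_ne_zero 2 (mul_ne_zero hz0 hw0)) (pow_ne_zero 3 hzw))]
    field_simp
    linear_combination (z^(l+2) * w^(l+2)) * hf
  refine ⟨h1, ?_⟩
  rw [h1, Complex.sub_conj]
  push_cast
  ring
end

section
/- Let l be a natural number, a > 0 a real number, and x₁ ∈ ℝ. Set z = x₁ + a·i ∈ ℂ. Then the l-th derivative at x₁ of the function ℝ → ℝ, x ↦ (x² + a²)^{−2}, equals (as a complex number, under the embedding ℝ ↪ ℂ) Σ_{k=0}^{l} (−1)^{l}·l!·(l−k+1)·(k+1)·z^{−(l−k+2)}·z̄^{−(k+2)}. -/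
open Complex

private noncomputable def gg (a : ℝ) (l : ℕ) (x : ℝ) (k : ℕ) : ℂ :=
  (-1 : ℂ) ^ l * (l.factorial : ℂ) * ((l - k + 1 : ℕ) : ℂ) * ((k : ℂ) + 1)
    * ((x : ℂ) + (a : ℂ) * Complex.I) ^ (-((l : ℤ) - (k : ℤ) + 2))
    * ((x : ℂ) - (a : ℂ) * Complex.I) ^ (-((k : ℤ) + 2))

private noncomputable def Gc (a : ℝ) (l : ℕ) (x : ℝ) : ℂ :=
  ∑ k ∈ Finset.range (l + 1), gg a l x k

private noncomputable def AA (a : ℝ) (l : ℕ) (x : ℝ) (k : ℕ) : ℂ :=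
  (-1 : ℂ) ^ l * (l.factorial : ℂ) * ((l - k + 1 : ℕ) : ℂ) * ((k : ℂ) + 1)
    * (((-((l : ℤ) - (k : ℤ) + 2) : ℤ) : ℂ)
        * ((x : ℂ) + (a : ℂ) * Complex.I) ^ (-((l : ℤ) - (k : ℤ) + 2) - 1))
    * ((x : ℂ) - (a : ℂ) * Complex.I) ^ (-((k : ℤ) + 2))

private noncomputable def BB (a : ℝ) (l : ℕ) (x : ℝ) (k : ℕ) : ℂ :=
  (-1 : ℂ) ^ l * (l.factorial : ℂ) * ((l - k + 1 : ℕ) : ℂ) * ((k : ℂ) + 1)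
    * ((x : ℂ) + (a : ℂ) * Complex.I) ^ (-((l : ℤ) - (k : ℤ) + 2))
    * (((-((k : ℤ) + 2) : ℤ) : ℂ)
        * ((x : ℂ) - (a : ℂ) * Complex.I) ^ (-((k : ℤ) + 2) - 1))

private lemma z_ne (a x : ℝ) (ha : a ≠ 0) : (x : ℂ) + a * I ≠ 0 := by
  intro h
  have := congrArg Complex.im h
  simp at this
  exact ha this

private lemma w_ne (a x : ℝ) (ha : a ≠ 0) : (x : ℂ) - a * I ≠ 0 := by
  intro h
  have := congrArg Complex.im h
  simp at this
  exact ha this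

private lemma hasDerivAt_shift_zpow (m : ℤ) (c : ℂ) (x : ℝ) (h : (x : ℂ) + c ≠ 0) :
    HasDerivAt (fun y : ℝ => ((y : ℂ) + c) ^ m) ((m : ℂ) * ((x : ℂ) + c) ^ (m - 1)) x := by
  have h1 : HasDerivAt (fun u : ℂ => (u + c) ^ m)
      ((m : ℂ) * ((x : ℂ) + c) ^ (m - 1) * 1) (x : ℂ) :=
    (hasDerivAt_zpow m ((x : ℂ) + c) (Or.inl h)).comp (h := fun u : ℂ => u + c) (x : ℂ)
      ((hasDerivAt_id' _).add_const c)
  simpa using h1.comp_ofReal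

private lemma hasDerivAt_shift_zpow' (m : ℤ) (a : ℝ) (ha : a ≠ 0) (x : ℝ) :
    HasDerivAt (fun y : ℝ => ((y : ℂ) - (a : ℂ) * I) ^ m)
      ((m : ℂ) * ((x : ℂ) - (a : ℂ) * I) ^ (m - 1)) x := by
  have h := hasDerivAt_shift_zpow m (-((a : ℂ) * I)) x
    (by rw [← sub_eq_add_neg]; exact w_ne a x ha)
  simp only [← sub_eq_add_neg] at h
  exact h

private lemma hasDerivAt_Gc (a : ℝ) (ha : a ≠ 0) (l : ℕ) (x : ℝ) :
    HasDerivAt (Gc a l) (∑ k ∈ Finset.range (l + 1), (AA a l x k + BB a l x k)) x := by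
  have : HasDerivAt (fun y => ∑ k ∈ Finset.range (l + 1), gg a l y k)
      (∑ k ∈ Finset.range (l + 1), (AA a l x k + BB a l x k)) x := by
    apply HasDerivAt.fun_sum
    intro k _
    have hZ := hasDerivAt_shift_zpow (-((l : ℤ) - (k : ℤ) + 2)) ((a : ℂ) * I) x
      (z_ne a x ha)
    have hW := hasDerivAt_shift_zpow' (-((k : ℤ) + 2)) a ha x
    exact (hZ.const_mul ((-1 : ℂ) ^ l * (l.factorial : ℂ) * ((l - k + 1 : ℕ) : ℂ)
      * ((k : ℂ) + 1))).mul hW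
  exact this

private lemma edge0 (a : ℝ) (l : ℕ) (x : ℝ) : AA a l x 0 = gg a (l + 1) x 0 := by
  simp only [AA, gg, Nat.sub_zero, Nat.factorial_succ]
  push_cast
  ring

private lemma edgeTop (a : ℝ) (l : ℕ) (x : ℝ) : BB a l x l = gg a (l + 1) x (l + 1) := by
  simp only [BB, gg, Nat.sub_self, Nat.factorial_succ,
    show l + 1 - (l + 1) = 0 from by omega]
  push_cast
  ring

private lemma mid (a : ℝ) (l : ℕ) (x : ℝ) (k : ℕ) (hk : k < l) :
    gg a (l + 1) x (k + 1) = AA a l x (k + 1) + BB a l x k := by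
  simp only [AA, BB, gg, Nat.factorial_succ,
    show l + 1 - (k + 1) + 1 = (l - k) + 1 from by omega,
    show l - (k + 1) + 1 = l - k from by omega]
  push_cast [Nat.cast_sub hk.le]
  ring

private lemma D_eq (a : ℝ) (l : ℕ) (x : ℝ) :
    (∑ k ∈ Finset.range (l + 1), (AA a l x k + BB a l x k)) = Gc a (l + 1) x := by
  rw [Finset.sum_add_distrib, Gc]
  rw [Finset.sum_range_succ (fun k => BB a l x k) l,
      Finset.sum_range_succ (fun k => gg a (l + 1) x k) (l + 1),
      Finset.sum_range_succ' (fun k => AA a l x k) l,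
      Finset.sum_range_succ' (fun k => gg a (l + 1) x k) l]
  have hmid : (∑ k ∈ Finset.range l, AA a l x (k + 1)) + ∑ k ∈ Finset.range l, BB a l x k
      = ∑ k ∈ Finset.range l, gg a (l + 1) x (k + 1) := by
    rw [← Finset.sum_add_distrib]
    exact Finset.sum_congr rfl fun k hk => (mid a l x k (Finset.mem_range.mp hk)).symm
  rw [edge0, edgeTop]
  linear_combination hmid

private lemma conj_gg (a : ℝ) (x : ℝ) (l k : ℕ) (hk : k ≤ l) :
    (starRingEnd ℂ) (gg a l x k) = gg a l x (l - k) := by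
  simp only [gg, map_mul, map_pow, map_zpow₀, map_add, map_sub, map_one, map_neg,
    map_natCast, map_ofNat, Complex.conj_ofReal, Complex.conj_I,
    show l - (l - k) + 1 = k + 1 from by omega]
  rw [mul_neg, ← sub_eq_add_neg, sub_neg_eq_add]
  push_cast [Nat.cast_sub hk]
  rw [show -((l : ℤ) - ((l : ℤ) - (k : ℤ)) + 2) = -((k : ℤ) + 2) by ring,
      show -((l : ℤ) - (k : ℤ) + 2) = -(((l : ℤ) - (k : ℤ)) + 2) by ring]
  ring

private lemma conj_Gc (a : ℝ) (x : ℝ) (l : ℕ) : (starRingEnd ℂ) (Gc a l x) = Gc a l x := by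
  rw [Gc, map_sum]
  rw [← Finset.sum_range_reflect (fun k => gg a l x k) (l + 1)]
  apply Finset.sum_congr rfl
  intro k hk
  have hk' : k ≤ l := by
    have := Finset.mem_range.mp hk; omega
  rw [show l + 1 - 1 - k = l - k from by omega]
  exact conj_gg a x l k hk'

private lemma gc_real (a : ℝ) (x : ℝ) (l : ℕ) : ((Gc a l x).re : ℂ) = Gc a l x := by
  rw [Complex.conj_eq_iff_re.mp (conj_Gc a x l)]

private lemma main_ind (a : ℝ) (ha : 0 < a) (l : ℕ) :
    ∀ x : ℝ, ((iteratedDeriv l (fun x : ℝ => ((x ^ 2 + a ^ 2) ^ 2)⁻¹) x : ℝ) : ℂ)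
      = Gc a l x := by
  have ha' : a ≠ 0 := ne_of_gt ha
  induction l with
  | zero =>
    intro x
    rw [iteratedDeriv_zero]
    have hzw : ((x : ℂ) ^ 2 + (a : ℂ) ^ 2) = ((x : ℂ) + a * I) * ((x : ℂ) - a * I) := by
      ring_nf
      rw [Complex.I_sq]
      ring
    simp only [Gc, gg, Finset.sum_range_one]
    push_cast
    rw [hzw, mul_pow, mul_inv]
    norm_num [zpow_neg, zpow_ofNat]
  | succ l ih =>
    intro x
    rw [iteratedDeriv_succ]
    have hfun : iteratedDeriv l (fun x : ℝ => ((x ^ 2 + a ^ 2) ^ 2)⁻¹)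
        = fun y => (Gc a l y).re := by
      funext y
      have := ih y
      have := congrArg Complex.re this
      simpa using this
    rw [hfun]
    have hD := hasDerivAt_Gc a ha' l x
    have hre : HasDerivAt (fun y => (Gc a l y).re)
        ((∑ k ∈ Finset.range (l + 1), (AA a l x k + BB a l x k)).re) x :=
      (Complex.reCLM.hasFDerivAt.comp_hasDerivAt x hD)
    rw [hre.deriv, D_eq]
    exact gc_real a x (l + 1)

/-- The `l`-th derivative of `x ↦ (x² + a²)^{−2}` at `x₁`, expressed (as a complex
number) in terms of `z = x₁ + a·i` and its conjugate:
`Σ_{k=0}^{l} (−1)^l·l!·(l−k+1)·(k+1)·z^{−(l−k+2)}·z̄^{−(k+2)}`. -/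
theorem iteratedDeriv_inv_sq_norm (l : ℕ) (a : ℝ) (ha : 0 < a) (x₁ : ℝ) :
    ((iteratedDeriv l (fun x : ℝ => ((x ^ 2 + a ^ 2) ^ 2)⁻¹) x₁ : ℝ) : ℂ) =
      ∑ k ∈ Finset.range (l + 1),
        (-1 : ℂ) ^ l * (l.factorial : ℂ) * ((l - k + 1 : ℕ) : ℂ) * ((k : ℂ) + 1)
          * ((x₁ : ℂ) + (a : ℂ) * Complex.I) ^ (-((l : ℤ) - (k : ℤ) + 2))
          * (starRingEnd ℂ ((x₁ : ℂ) + (a : ℂ) * Complex.I)) ^ (-((k : ℤ) + 2)) := by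

  rw [main_ind a ha l x₁]
  rw [Gc]
  apply Finset.sum_congr rfl
  intro k _
  rw [gg]
  congr 2
  rw [map_add, map_mul, Complex.conj_ofReal, Complex.conj_ofReal, Complex.conj_I]
  ring
end

section
/- Let l be a natural number, a > 0 a real number, and x₁ ∈ ℝ. Set z = x₁ + a·i ∈ ℂ. Then the l-th derivative at x₁ of the function ℝ → ℝ, x ↦ (x² + a²)^{−2}, equals (as a complex number) (−1)^{l}·l!·2·(u − ū)/(|z|⁴·(z−z̄)³), where u = (z̄²/z^{l})·(z + (l+1)·(z−z̄)/2); equivalently it equals the real number −(−1)^{l}·l!·Im(u)/(2·a³·(x₁²+a²)²). -/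
open Complex
open scoped ContDiff

/-- The complex number `z = x₁ + a·i`. -/
noncomputable def zOf (x₁ a : ℝ) : ℂ := (x₁ : ℂ) + (a : ℂ) * Complex.I

/-- The complex number `u = (z̄²/z^l)·(z + (l+1)·(z−z̄)/2)`. -/
noncomputable def uOf (l : ℕ) (z : ℂ) : ℂ :=
  (starRingEnd ℂ z) ^ 2 / z ^ l * (z + ((l : ℂ) + 1) * (z - starRingEnd ℂ z) / 2)

lemma myIteratedDeriv_add {f g : ℝ → ℂ} (hf : ContDiff ℝ ∞ f) (hg : ContDiff ℝ ∞ g)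
    (n : ℕ) (x : ℝ) :
    iteratedDeriv n (fun y => f y + g y) x = iteratedDeriv n f x + iteratedDeriv n g x := by
  simp only [← iteratedDerivWithin_univ]
  exact iteratedDerivWithin_add (Set.mem_univ x) uniqueDiffOn_univ
    (hf.of_le (by exact_mod_cast le_top)).contDiffWithinAt (hg.of_le (by exact_mod_cast le_top)).contDiffWithinAt

lemma myIteratedDeriv_const_mul {f : ℝ → ℂ} (hf : ContDiff ℝ ∞ f) (c : ℂ)
    (n : ℕ) (x : ℝ) :
    iteratedDeriv n (fun y => c * f y) x = c * iteratedDeriv n f x := by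
  simp only [← iteratedDerivWithin_univ]
  exact iteratedDerivWithin_const_smul (Set.mem_univ x) uniqueDiffOn_univ c
    (hf.of_le (by exact_mod_cast le_top)).contDiffWithinAt

lemma ofReal_iteratedDeriv {f : ℝ → ℝ} (hf : ContDiff ℝ ∞ f) (l : ℕ) :
    (fun x : ℝ => ((iteratedDeriv l f x : ℝ) : ℂ)) = iteratedDeriv l (fun x => (f x : ℂ)) := by
  induction l with
  | zero => simp
  | succ n ih =>
    funext x
    simp only [iteratedDeriv_succ]
    rw [← ih]
    have hd : HasDerivAt (iteratedDeriv n f) (deriv (iteratedDeriv n f) x) x := by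
      rw [iteratedDeriv_eq_iterate]
      exact ((hf.iterate_deriv n).differentiable (by simp)).differentiableAt.hasDerivAt
    exact (hd.ofReal_comp.deriv).symm

lemma contDiff_term (c : ℂ) (hc : ∀ x : ℝ, (x : ℂ) - c ≠ 0) (k : ℕ) :
    ContDiff ℝ ∞ fun x : ℝ => (((x : ℂ) - c) ^ (k + 1))⁻¹ := by
  exact ((Complex.ofRealCLM.contDiff.sub contDiff_const).pow (k+1)).inv
    fun x => pow_ne_zero _ (hc x)

lemma iteratedDeriv_term (c : ℂ) (hc : ∀ x : ℝ, (x : ℂ) - c ≠ 0) (k l : ℕ) :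
    iteratedDeriv l (fun x : ℝ => (((x : ℂ) - c) ^ (k + 1))⁻¹) =
      fun x : ℝ => (-1) ^ l * (∏ i ∈ Finset.range l, ((k : ℂ) + 1 + i))
        * (((x : ℂ) - c) ^ (k + 1 + l))⁻¹ := by
  induction l with
  | zero => simp
  | succ n ih =>
    rw [iteratedDeriv_succ, ih]
    funext x
    have h1 : HasDerivAt (fun w : ℂ => ((w - c) ^ (k + 1 + n))⁻¹)
        (-(((k + 1 + n : ℕ) : ℂ) * ((x:ℂ) - c) ^ (k + n) * 1) / (((x:ℂ) - c) ^ (k + 1 + n)) ^ 2)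
        (x : ℂ) := by
      have h0 : HasDerivAt (fun w : ℂ => w - c) 1 (x : ℂ) :=
        (hasDerivAt_id _).sub_const c
      have h2 := (h0.pow (k + 1 + n)).inv (pow_ne_zero _ (hc x))
      have e : k + 1 + n - 1 = k + n := by omega
      rwa [e] at h2
    have h2 := (h1.comp_ofReal).const_mul ((-1:ℂ) ^ n * (∏ i ∈ Finset.range n, ((k : ℂ) + 1 + i)))
    rw [h2.deriv, Finset.prod_range_succ]
    have hx := hc x
    push_cast
    field_simp
    ring

lemma prod1 (l : ℕ) : (∏ i ∈ Finset.range l, ((0:ℂ) + 1 + i)) = l.factorial := by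
  induction l with
  | zero => simp
  | succ n ih => rw [Finset.prod_range_succ, ih, Nat.factorial_succ]; push_cast; ring

lemma prod2 (l : ℕ) : (∏ i ∈ Finset.range l, ((1:ℂ) + 1 + i)) = (l+1).factorial := by
  induction l with
  | zero => simp
  | succ n ih =>
    rw [Finset.prod_range_succ, ih]
    have h : ((n+1)+1).factorial = ((n+1)+1) * (n+1).factorial := Nat.factorial_succ _
    push_cast [h]
    ring

lemma myIteratedDeriv_four {f1 f2 f3 f4 : ℝ → ℂ}
    (h1 : ContDiff ℝ ∞ f1) (h2 : ContDiff ℝ ∞ f2) (h3 : ContDiff ℝ ∞ f3) (h4 : ContDiff ℝ ∞ f4)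
    (c1 c2 c3 c4 : ℂ) (n : ℕ) (x : ℝ) :
    iteratedDeriv n (fun y => c1 * f1 y + (c2 * f2 y + (c3 * f3 y + c4 * f4 y))) x =
      c1 * iteratedDeriv n f1 x + (c2 * iteratedDeriv n f2 x +
        (c3 * iteratedDeriv n f3 x + c4 * iteratedDeriv n f4 x)) := by
  have m1 : ContDiff ℝ ∞ fun y => c1 * f1 y := h1.const_smul c1
  have m2 : ContDiff ℝ ∞ fun y => c2 * f2 y := h2.const_smul c2
  have m3 : ContDiff ℝ ∞ fun y => c3 * f3 y := h3.const_smul c3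
  have m4 : ContDiff ℝ ∞ fun y => c4 * f4 y := h4.const_smul c4
  rw [myIteratedDeriv_add m1 (m2.add (m3.add m4)),
    myIteratedDeriv_add m2 (m3.add m4), myIteratedDeriv_add m3 m4,
    myIteratedDeriv_const_mul h1, myIteratedDeriv_const_mul h2,
    myIteratedDeriv_const_mul h3, myIteratedDeriv_const_mul h4]

lemma pf_decomp (w₁ q : ℂ) (h₁ : w₁ ≠ 0) (h₂ : w₁ + 2*q ≠ 0) (hq : q ≠ 0) :
    (w₁ ^ 2 * (w₁ + 2*q) ^ 2)⁻¹ =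
      -(1/(4*q^3)) * (w₁ ^ (0+1))⁻¹ +
        ((1/(4*q^2)) * (w₁ ^ (1+1))⁻¹ +
        ((1/(4*q^3)) * ((w₁ + 2*q) ^ (0+1))⁻¹ +
         (1/(4*q^2)) * ((w₁ + 2*q) ^ (1+1))⁻¹)) := by
  have n1 : (4:ℂ)*q^3*w₁ ≠ 0 :=
    mul_ne_zero (mul_ne_zero (by norm_num) (pow_ne_zero _ hq)) h₁
  have n2 : (4:ℂ)*q^2*w₁^2 ≠ 0 :=
    mul_ne_zero (mul_ne_zero (by norm_num) (pow_ne_zero _ hq)) (pow_ne_zero _ h₁)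
  have n3 : (4:ℂ)*q^3*(w₁+2*q) ≠ 0 :=
    mul_ne_zero (mul_ne_zero (by norm_num) (pow_ne_zero _ hq)) h₂
  have n4 : (4:ℂ)*q^2*(w₁+2*q)^2 ≠ 0 :=
    mul_ne_zero (mul_ne_zero (by norm_num) (pow_ne_zero _ hq)) (pow_ne_zero _ h₂)
  have n0 : w₁^2*(w₁+2*q)^2 ≠ 0 := mul_ne_zero (pow_ne_zero _ h₁) (pow_ne_zero _ h₂)
  simp only [zero_add, pow_one, one_div, ← mul_inv, neg_mul, show (1+1)=2 from rfl]
  simp only [← one_div]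
  rw [show -(1/((4:ℂ)*q^3*w₁)) = (-1)/(4*q^3*w₁) from (neg_div _ _).symm]
  rw [div_add_div _ _ n3 n4, div_add_div _ _ n2 (mul_ne_zero n3 n4),
    div_add_div _ _ n1 (mul_ne_zero n2 (mul_ne_zero n3 n4)),
    div_eq_div_iff n0 (mul_ne_zero n1 (mul_ne_zero n2 (mul_ne_zero n3 n4)))]
  ring

lemma key_alg (A B q α β F m : ℂ) (hA0 : A ≠ 0) (hB0 : B ≠ 0) (hq0 : q ≠ 0)
    (hα : α ≠ 0) (hβ : β ≠ 0) (hs : A - B = 2*q) :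
    -(1/(4*q^3)) * (F * (B*β)⁻¹) +
      (1/(4*q^2) * (F * m * (B^2*β)⁻¹) +
        (1/(4*q^3) * (F * (A*α)⁻¹) +
          1/(4*q^2) * (F * m * (A^2*α)⁻¹))) =
    F * 2 * (B^2/α * (A + m*(A-B)/2) - A^2/β * (B + m*(B-A)/2)) / ((A*B)^2 * (A-B)^3) := by
  have h4q3 : (4:ℂ)*q^3*(B*β) ≠ 0 :=
    mul_ne_zero (mul_ne_zero (by norm_num) (pow_ne_zero _ hq0)) (mul_ne_zero hB0 hβ)
  have h4q2B : (4:ℂ)*q^2*(B^2*β) ≠ 0 :=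
    mul_ne_zero (mul_ne_zero (by norm_num) (pow_ne_zero _ hq0))
      (mul_ne_zero (pow_ne_zero _ hB0) hβ)
  have h4q3A : (4:ℂ)*q^3*(A*α) ≠ 0 :=
    mul_ne_zero (mul_ne_zero (by norm_num) (pow_ne_zero _ hq0)) (mul_ne_zero hA0 hα)
  have h4q2A : (4:ℂ)*q^2*(A^2*α) ≠ 0 :=
    mul_ne_zero (mul_ne_zero (by norm_num) (pow_ne_zero _ hq0))
      (mul_ne_zero (pow_ne_zero _ hA0) hα)
  have hD : α*β*((A*B)^2*(2*q)^3) ≠ 0 :=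
    mul_ne_zero (mul_ne_zero hα hβ) (mul_ne_zero (pow_ne_zero _ (mul_ne_zero hA0 hB0))
      (pow_ne_zero _ (mul_ne_zero two_ne_zero hq0)))
  rw [hs, show B - A = -(2*q) by linear_combination -hs]
  rw [show -(1/(4*q^3)) * (F * (B*β)⁻¹) +
      (1/(4*q^2) * (F * m * (B^2*β)⁻¹) +
        (1/(4*q^3) * (F * (A*α)⁻¹) +
          1/(4*q^2) * (F * m * (A^2*α)⁻¹))) =
      (-F)/(4*q^3*(B*β)) + (F*m/(4*q^2*(B^2*β)) + (F/(4*q^3*(A*α)) + F*m/(4*q^2*(A^2*α))))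
      from by ring]
  rw [div_mul_eq_mul_div, div_mul_eq_mul_div, div_sub_div _ _ hα hβ, ← mul_div_assoc, div_div]
  rw [div_add_div _ _ h4q3A h4q2A, div_add_div _ _ h4q2B (mul_ne_zero h4q3A h4q2A),
    div_add_div _ _ h4q3 (mul_ne_zero h4q2B (mul_ne_zero h4q3A h4q2A)),
    div_eq_div_iff (mul_ne_zero h4q3 (mul_ne_zero h4q2B (mul_ne_zero h4q3A h4q2A))) hD]
  ring

set_option maxHeartbeats 1600000 in
/-- The `l`-th derivative of `x ↦ (x² + a²)^{−2}` at `x₁`, in closed form: with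
`z = x₁ + a·i` and `u = (z̄²/z^l)·(z + (l+1)(z−z̄)/2)`, it equals (as a complex
number) `(−1)^l·l!·2·(u−ū)/(|z|⁴(z−z̄)³)`, and equivalently it equals the real
number `−(−1)^l·l!·Im(u)/(2a³(x₁²+a²)²)`. -/
theorem iteratedDeriv_inv_sq_closed_form (l : ℕ) (a : ℝ) (ha : 0 < a) (x₁ : ℝ) :
    (((iteratedDeriv l (fun x : ℝ => ((x ^ 2 + a ^ 2) ^ 2)⁻¹) x₁ : ℝ) : ℂ) =
      (-1 : ℂ) ^ l * (l.factorial : ℂ) * 2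
        * (uOf l (zOf x₁ a) - starRingEnd ℂ (uOf l (zOf x₁ a)))
        / (((‖zOf x₁ a‖ : ℝ) : ℂ) ^ 4
            * (zOf x₁ a - starRingEnd ℂ (zOf x₁ a)) ^ 3))
    ∧
    (iteratedDeriv l (fun x : ℝ => ((x ^ 2 + a ^ 2) ^ 2)⁻¹) x₁ =
      -((-1 : ℝ) ^ l * (l.factorial : ℝ) * (uOf l (zOf x₁ a)).im
          / (2 * a ^ 3 * (x₁ ^ 2 + a ^ 2) ^ 2))) := by
  have ha' : a ≠ 0 := ha.ne'
  have haC : (a : ℂ) ≠ 0 := by exact_mod_cast ha'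
  set p : ℂ := (a : ℂ) * Complex.I with hp
  have hc1 : ∀ x : ℝ, (x : ℂ) - p ≠ 0 := by
    intro x h
    have h2 := congrArg Complex.im h
    simp [hp] at h2
    exact ha' h2
  have hc2 : ∀ x : ℝ, (x : ℂ) - (-p) ≠ 0 := by
    intro x h
    have h2 := congrArg Complex.im h
    simp [hp] at h2
    exact ha' h2
  have hpos : ∀ x : ℝ, x ^ 2 + a ^ 2 ≠ 0 := fun x => by positivity
  have hfR : ContDiff ℝ ∞ (fun x : ℝ => ((x ^ 2 + a ^ 2) ^ 2)⁻¹) :=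
    (((contDiff_id.pow 2).add contDiff_const).pow 2).inv fun x => pow_ne_zero _ (hpos x)
  have h1 : ((iteratedDeriv l (fun x : ℝ => ((x ^ 2 + a ^ 2) ^ 2)⁻¹) x₁ : ℝ) : ℂ)
      = iteratedDeriv l (fun x : ℝ => ((((x ^ 2 + a ^ 2) ^ 2)⁻¹ : ℝ) : ℂ)) x₁ :=
    congrFun (ofReal_iteratedDeriv hfR l) x₁
  have hPF : (fun x : ℝ => ((((x ^ 2 + a ^ 2) ^ 2)⁻¹ : ℝ) : ℂ)) =
      fun x : ℝ => (-(1/(4*p^3))) * (((x:ℂ) - p) ^ (0+1))⁻¹ +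
        ((1/(4*p^2)) * (((x:ℂ) - p) ^ (1+1))⁻¹ +
        ((1/(4*p^3)) * (((x:ℂ) - (-p)) ^ (0+1))⁻¹ +
         (1/(4*p^2)) * (((x:ℂ) - (-p)) ^ (1+1))⁻¹)) := by
    funext x
    have hx1 := hc1 x
    have hx2 := hc2 x
    have hp0 : p ≠ 0 := mul_ne_zero haC Complex.I_ne_zero
    have hx2' : ((x:ℂ) - p) + 2*p ≠ 0 := by
      rw [show ((x:ℂ) - p) + 2*p = (x:ℂ) - -p by ring]
      exact hx2
    push_cast
    rw [show ((x:ℂ)^2 + (a:ℂ)^2)^2 = (((x:ℂ) - p) ^ 2 * (((x:ℂ) - p) + 2*p) ^ 2) by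
      rw [hp]
      linear_combination ((a:ℂ)^2*(2*(x:ℂ)^2 + (a:ℂ)^2 - (a:ℂ)^2*Complex.I^2)) * Complex.I_sq]
    rw [pf_decomp ((x:ℂ) - p) p hx1 hx2' hp0]
    rw [show ((x:ℂ) - p) + 2*p = (x:ℂ) - -p by ring]
  rw [hPF, myIteratedDeriv_four (contDiff_term p hc1 0) (contDiff_term p hc1 1)
      (contDiff_term (-p) hc2 0) (contDiff_term (-p) hc2 1),
    iteratedDeriv_term p hc1 0 l, iteratedDeriv_term p hc1 1 l,
    iteratedDeriv_term (-p) hc2 0 l, iteratedDeriv_term (-p) hc2 1 l] at h1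
  push_cast [prod1, prod2] at h1
  have hzero : zOf x₁ a = (x₁ : ℂ) + p := rfl
  have hconj : starRingEnd ℂ (zOf x₁ a) = (x₁ : ℂ) - p := by
    simp [zOf, hp, map_add, map_mul, Complex.conj_ofReal, Complex.conj_I]
    ring
  have habs : ((‖zOf x₁ a‖ : ℝ) : ℂ) ^ 4 = ((x₁:ℂ)^2 + (a:ℂ)^2)^2 := by
    have h2 : (‖zOf x₁ a‖) ^ 2 = x₁ ^ 2 + a ^ 2 := by
      rw [Complex.sq_norm, zOf, Complex.normSq_add_mul_I]
    calc ((‖zOf x₁ a‖ : ℝ) : ℂ) ^ 4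
        = (((‖zOf x₁ a‖ ^ 2 : ℝ)) : ℂ) ^ 2 := by push_cast; ring
      _ = ((x₁:ℂ)^2 + (a:ℂ)^2)^2 := by rw [h2]; push_cast; ring
  have hx1 := hc1 x₁
  have hx2 := hc2 x₁
  have goal1 : ((iteratedDeriv l (fun x : ℝ => ((x ^ 2 + a ^ 2) ^ 2)⁻¹) x₁ : ℝ) : ℂ) =
      (-1 : ℂ) ^ l * (l.factorial : ℂ) * 2
        * (uOf l (zOf x₁ a) - starRingEnd ℂ (uOf l (zOf x₁ a)))
        / (((‖zOf x₁ a‖ : ℝ) : ℂ) ^ 4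
            * (zOf x₁ a - starRingEnd ℂ (zOf x₁ a)) ^ 3) := by
    have hp0 : p ≠ 0 := mul_ne_zero haC Complex.I_ne_zero
    have hx2' : (x₁:ℂ) + p ≠ 0 := by rwa [sub_neg_eq_add] at hx2
    have hcp : (starRingEnd ℂ) p = -p := by rw [hp]; simp [Complex.conj_ofReal]
    rw [h1, habs, uOf, hzero]
    simp only [map_mul, map_div₀, map_pow, map_add, map_sub, map_one, Complex.conj_conj,
      map_ofNat, map_neg, neg_neg, Complex.conj_natCast, Complex.conj_ofReal, hcp]
    rw [show (x₁:ℂ) + -p = (x₁:ℂ) - p by ring]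
    push_cast [Nat.factorial_succ]
    obtain ⟨B, hB⟩ : ∃ B, (x₁:ℂ) - p = B := ⟨_, rfl⟩
    obtain ⟨A, hA⟩ : ∃ A, (x₁:ℂ) + p = A := ⟨_, rfl⟩
    have hB0 : B ≠ 0 := hB ▸ hx1
    have hA0 : A ≠ 0 := hA ▸ hx2'
    have hAB : (x₁:ℂ)^2 + (a:ℂ)^2 = A * B := by
      rw [← hA, ← hB, hp]
      linear_combination ((a:ℂ)^2) * Complex.I_sq
    have hs2 : A - B = 2 * p := by rw [← hA, ← hB]; ring
    rw [show (x₁:ℂ) - -p = A by rw [← hA]; ring] at *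
    rw [hB, hA, hAB]
    obtain ⟨q, hq⟩ : ∃ q, p = q := ⟨_, rfl⟩
    rw [hq] at hs2 hp0 ⊢
    simp only [pow_add, pow_one]
    have hαn : A ^ l ≠ 0 := pow_ne_zero _ hA0
    have hβn : B ^ l ≠ 0 := pow_ne_zero _ hB0
    obtain ⟨α, hα⟩ : ∃ α, A ^ l = α := ⟨_, rfl⟩
    obtain ⟨β, hβ⟩ : ∃ β, B ^ l = β := ⟨_, rfl⟩
    rw [hα] at hαn ⊢
    rw [hβ] at hβn ⊢
    linear_combination key_alg A B q α β ((-1)^l * (l.factorial:ℂ)) ((l:ℂ)+1)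
      hA0 hB0 hp0 hαn hβn hs2
  refine ⟨goal1, ?_⟩
  have goal2c : ((-((-1 : ℝ) ^ l * (l.factorial : ℝ) * (uOf l (zOf x₁ a)).im
          / (2 * a ^ 3 * (x₁ ^ 2 + a ^ 2) ^ 2)) : ℝ) : ℂ) =
      (-1 : ℂ) ^ l * (l.factorial : ℂ) * 2
        * (uOf l (zOf x₁ a) - starRingEnd ℂ (uOf l (zOf x₁ a)))
        / (((‖zOf x₁ a‖ : ℝ) : ℂ) ^ 4
            * (zOf x₁ a - starRingEnd ℂ (zOf x₁ a)) ^ 3) := by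
    rw [Complex.sub_conj, Complex.sub_conj, habs]
    have him : (zOf x₁ a).im = a := by simp [zOf]
    rw [him]
    have hS : ((x₁:ℂ)^2 + (a:ℂ)^2) ≠ 0 := by
      intro h
      exact hpos x₁ (by exact_mod_cast h)
    have hI := Complex.I_ne_zero
    push_cast
    field_simp
    ring_nf
    have h3 : Complex.I ^ 3 = -Complex.I := by rw [pow_succ, Complex.I_sq]; ring
    rw [Complex.I_sq]
    ring
  exact Complex.ofReal_inj.mp (goal1.trans goal2c.symm)
end

section
/- Let n ≥ 2 be a natural number and let σ be a real quaternion with Im σ ≠ 0. Set a = |Im σ| > 0 and z = Re σ + a·i ∈ ℂ. Then the (2n−2)-nd derivative at x = Re σ of the function ℝ → ℍ, x ↦ conj(x + Im σ)·(x² + a²)^{−2}, equals ((2n−2)!/(2·a³·|z|⁴))·( Im(u₂) − Im(u₁)·conj σ ), where u₁ = (z̄²/z^{2n−2})·(z + (2n−1)·(z−z̄)/2) and u₂ = (z̄²/z^{2n−3})·(z + (2n−2)·(z−z̄)/2) are complex numbers, Im denotes the complex imaginary part, and conj σ is the quaternion conjugate of σ. -/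
open Quaternion Complex

noncomputable def qzOf (x a : ℝ) : ℂ := (x : ℂ) - (a : ℂ) * Complex.I
noncomputable def cOf (a : ℝ) : ℂ := 2 * (a : ℂ) * Complex.I
noncomputable def Gm (a : ℝ) (m : ℕ) (x : ℝ) : ℂ :=
  (-1)^m * (m.factorial : ℂ) *
    ( ((cOf a)^2)⁻¹ * ((qzOf x a)^(m+1))⁻¹
    - ((cOf a)^2)⁻¹ * ((zOf x a)^(m+1))⁻¹
    - ((m:ℂ)+1) * (cOf a)⁻¹ * ((zOf x a)^(m+2))⁻¹ )
lemma conj_zOf (x a : ℝ) : (starRingEnd ℂ) (zOf x a) = qzOf x a := by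
  simp [zOf, qzOf, sub_eq_add_neg]
lemma zOf_ne (x : ℝ) {a : ℝ} (ha : a ≠ 0) : zOf x a ≠ 0 := fun h => by
  have := congrArg Complex.im h; simp [zOf] at this; exact ha this
lemma qzOf_ne (x : ℝ) {a : ℝ} (ha : a ≠ 0) : qzOf x a ≠ 0 := fun h => by
  have := congrArg Complex.im h; simp [qzOf] at this; exact ha this
lemma cOf_ne {a : ℝ} (ha : a ≠ 0) : cOf a ≠ 0 := by
  simp [cOf, ha, Complex.I_ne_zero]
lemma cOf_eq (x a : ℝ) : cOf a = zOf x a - qzOf x a := by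
  simp only [cOf, zOf, qzOf]; ring
lemma im_coe (w : ℂ) : ((w.im : ℝ) : ℂ) = (w - (starRingEnd ℂ) w) / (2 * Complex.I) := by
  rw [Complex.sub_conj]; push_cast; field_simp
lemma abs4 (x a : ℝ) : ((‖zOf x a‖ : ℝ) : ℂ)^4 = (zOf x a * qzOf x a)^2 := by
  have h1 : ((‖zOf x a‖ : ℝ) : ℂ)^4 = (((‖zOf x a‖)^2 : ℝ) : ℂ)^2 := by
    push_cast; ring
  rw [h1, Complex.sq_norm, ← Complex.mul_conj, conj_zOf]
lemma cOf_cube (a : ℝ) : (cOf a)^3 = -(8 * (a:ℂ)^3 * Complex.I) := by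
  simp only [cOf]
  linear_combination (8*(a:ℂ)^3*Complex.I) * Complex.I_sq

lemma conj_qzOf (x a : ℝ) : (starRingEnd ℂ) (qzOf x a) = zOf x a := by
  simp [zOf, qzOf, sub_eq_add_neg]

lemma conj_uOf (l : ℕ) (x a : ℝ) :
    (starRingEnd ℂ) (uOf l (zOf x a)) =
      (zOf x a)^2 / (qzOf x a)^l * (qzOf x a + ((l:ℂ)+1) * (qzOf x a - zOf x a)/2) := by
  simp only [uOf, map_mul, map_div₀, map_pow, map_add, map_sub, Complex.conj_conj, conj_zOf,
    map_ofNat, map_natCast, map_one, conj_qzOf]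

set_option maxHeartbeats 1600000 in
lemma key (k : ℕ) (x a : ℝ) (ha : a ≠ 0) :
    Gm a (2*k+2) x =
      ((((2*k+2).factorial : ℝ) / (2*a^3*(‖zOf x a‖)^4) : ℝ) : ℂ) *
        (((uOf (2*k+1) (zOf x a)).im : ℝ) - ((uOf (2*k+2) (zOf x a)).im : ℝ) * qzOf x a) := by
  have hp := zOf_ne x ha
  have hq := qzOf_ne x ha
  have hcne := cOf_ne ha
  have ha' : (a:ℂ) ≠ 0 := by exact_mod_cast ha
  have step1 :
      ((((2*k+2).factorial : ℝ) / (2*a^3*(‖zOf x a‖)^4) : ℝ) : ℂ) *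
        (((uOf (2*k+1) (zOf x a)).im : ℝ) - ((uOf (2*k+2) (zOf x a)).im : ℝ) * qzOf x a) =
      -2 * ((2*k+2).factorial : ℂ) *
          ((uOf (2*k+1) (zOf x a) - (starRingEnd ℂ) (uOf (2*k+1) (zOf x a)))
            - (uOf (2*k+2) (zOf x a) - (starRingEnd ℂ) (uOf (2*k+2) (zOf x a))) * qzOf x a)
        / ((cOf a)^3 * (zOf x a * qzOf x a)^2) := by
    rw [_root_.im_coe, _root_.im_coe, cOf_cube]
    push_cast
    rw [abs4]
    field_simp
    ring
  have hA : uOf (2*k+1) (zOf x a) - uOf (2*k+2) (zOf x a) * qzOf x a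
      = cOf a * (qzOf x a)^2 * ((2*(k:ℂ)+3) * cOf a + zOf x a)
          / (2 * (zOf x a)^(2*k+2)) := by
    rw [cOf_eq x a]
    simp only [uOf, conj_zOf]
    push_cast
    field_simp
    ring
  have hB : (starRingEnd ℂ) (uOf (2*k+1) (zOf x a))
        - (starRingEnd ℂ) (uOf (2*k+2) (zOf x a)) * qzOf x a
      = cOf a * (zOf x a)^2 / (2 * (qzOf x a)^(2*k+1)) := by
    rw [cOf_eq x a]
    simp only [conj_uOf]
    push_cast
    field_simp
    ring
  have hnum : (uOf (2*k+1) (zOf x a) - (starRingEnd ℂ) (uOf (2*k+1) (zOf x a)))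
        - (uOf (2*k+2) (zOf x a) - (starRingEnd ℂ) (uOf (2*k+2) (zOf x a))) * qzOf x a
      = cOf a * (qzOf x a)^2 * ((2*(k:ℂ)+3) * cOf a + zOf x a) / (2 * (zOf x a)^(2*k+2))
        - cOf a * (zOf x a)^2 / (2 * (qzOf x a)^(2*k+1)) := by
    rw [← hA, ← hB]; ring
  rw [step1, hnum]
  have hneg : ((-1:ℂ))^(2*k+2) = 1 := Even.neg_one_pow ⟨k+1, by ring⟩
  simp only [Gm, hneg, one_mul]
  push_cast
  field_simp [hp, hq, hcne]
  ring

lemma mul_qz (x a : ℝ) : zOf x a * qzOf x a = ((x:ℂ)^2 + (a:ℂ)^2) := by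
  simp only [zOf, qzOf]
  linear_combination (-(a:ℂ)^2) * Complex.I_sq

lemma hasDerivAt_inv_pow' (k : ℕ) {w : ℝ → ℂ} {x : ℝ} (hw : HasDerivAt w 1 x) (h0 : w x ≠ 0) :
    HasDerivAt (fun y => ((w y)^(k+1))⁻¹) (-((k:ℂ)+1) * ((w x)^(k+2))⁻¹) x := by
  have hf := (hasDerivAt_pow (k+1) (w x)).inv (pow_ne_zero _ h0)
  have h2 := hf.scomp x hw
  simp only [one_smul] at h2
  refine h2.congr_deriv ?_
  have h1 : w x ^ (k+1) ≠ 0 := pow_ne_zero _ h0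
  rw [Nat.add_sub_cancel]; push_cast
  field_simp
  ring

lemma hasDerivAt_zOf (x a : ℝ) : HasDerivAt (fun y : ℝ => zOf y a) 1 x := by
  show HasDerivAt (fun y : ℝ => (y:ℂ) + (a:ℂ)*Complex.I) 1 x
  simpa using (Complex.ofRealCLM.hasDerivAt (x := x)).add_const ((a:ℂ) * Complex.I)

lemma hasDerivAt_qzOf (x a : ℝ) : HasDerivAt (fun y : ℝ => qzOf y a) 1 x := by
  show HasDerivAt (fun y : ℝ => (y:ℂ) - (a:ℂ)*Complex.I) 1 x
  simpa using (Complex.ofRealCLM.hasDerivAt (x := x)).sub_const ((a:ℂ) * Complex.I)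

lemma hasDerivAt_Gm {a : ℝ} (ha : a ≠ 0) (m : ℕ) (x : ℝ) :
    HasDerivAt (fun y => Gm a m y) (Gm a (m+1) x) x := by
  have hp := zOf_ne x ha
  have hq := qzOf_ne x ha
  have hc := cOf_ne ha
  have h1 := ((hasDerivAt_inv_pow' m (hasDerivAt_qzOf x a) hq).const_mul (((cOf a)^2)⁻¹))
  have h2 := ((hasDerivAt_inv_pow' m (hasDerivAt_zOf x a) hp).const_mul (((cOf a)^2)⁻¹))
  have h3 := ((hasDerivAt_inv_pow' (m+1) (hasDerivAt_zOf x a) hp).const_mul (((m:ℂ)+1) * (cOf a)⁻¹))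
  have h := (((h1.sub h2).sub h3).const_mul ((-1:ℂ)^m * (m.factorial : ℂ)))
  refine h.congr_deriv ?_
  simp only [Gm, Nat.factorial_succ, pow_succ]
  push_cast
  field_simp
  ring

lemma Gm_zero {a : ℝ} (ha : a ≠ 0) (x : ℝ) :
    Gm a 0 x = ((((x^2+a^2)^2)⁻¹ : ℝ) : ℂ) * qzOf x a := by
  have hp := zOf_ne x ha
  have hq := qzOf_ne x ha
  have hcne := cOf_ne ha
  have hnum : zOf x a ^ 2 - zOf x a * qzOf x a - cOf a * qzOf x a = cOf a ^ 2 := by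
    rw [cOf_eq x a]; ring
  have h1 : Gm a 0 x = (cOf a ^ 2 * (zOf x a)^2 * qzOf x a)⁻¹ *
      (zOf x a ^ 2 - zOf x a * qzOf x a - cOf a * qzOf x a) := by
    simp only [Gm, pow_zero, Nat.factorial_zero, Nat.cast_zero, Nat.cast_one, one_mul, zero_add,
      pow_one]
    field_simp [hp, hq, hcne]
  rw [h1, hnum]
  push_cast
  rw [show ((x:ℂ)^2+(a:ℂ)^2) = zOf x a * qzOf x a from (mul_qz x a).symm]
  field_simp [hp, hq, hcne]

/-- Explicit formula for the normalized Cauchy–Szegő kernel density: for a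
quaternion `σ` with `Im σ ≠ 0`, `a = |Im σ|` and `z = Re σ + a·i ∈ ℂ`, the
`(2n−2)`-nd derivative at `x = Re σ` of `x ↦ conj(x + Im σ)·(x² + a²)^{−2}`
equals `((2n−2)!/(2a³|z|⁴))·(Im(u₂) − Im(u₁)·conj σ)`, where
`u₁ = (z̄²/z^{2n−2})(z + (2n−1)(z−z̄)/2)` and
`u₂ = (z̄²/z^{2n−3})(z + (2n−2)(z−z̄)/2)`. -/
theorem cauchySzego_density_formula (n : ℕ) (hn : 2 ≤ n) (σ : ℍ[ℝ]) (hσ : σ.im ≠ 0) :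
    iteratedDeriv (2 * n - 2)
        (fun x : ℝ => ((x ^ 2 + ‖σ.im‖ ^ 2) ^ 2)⁻¹ • star ((x : ℍ[ℝ]) + σ.im)) σ.re =
      (((2 * n - 2).factorial : ℝ)
          / (2 * ‖σ.im‖ ^ 3 * ‖zOf σ.re ‖σ.im‖‖ ^ 4)) •
        (((uOf (2 * n - 3) (zOf σ.re ‖σ.im‖)).im : ℍ[ℝ])
          - (uOf (2 * n - 2) (zOf σ.re ‖σ.im‖)).im • star σ) := by
  have ha : ‖σ.im‖ ≠ 0 := norm_ne_zero_iff.2 hσ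
  set a : ℝ := ‖σ.im‖ with hadef
  set J : ℍ[ℝ] := a⁻¹ • σ.im with hJdef
  have hJ : J * J = -1 := by
    rw [hJdef, smul_mul_smul_comm, ← sq σ.im, Quaternion.im_sq, normSq_eq_norm_mul_self,
      smul_neg, ← Quaternion.coe_smul, smul_eq_mul]
    norm_cast
    rw [← hadef]
    field_simp
    norm_num
  set φ : ℂ →ₐ[ℝ] ℍ[ℝ] := Complex.liftAux J hJ with hφdef
  set L : ℂ →L[ℝ] ℍ[ℝ] := LinearMap.toContinuousLinearMap φ.toLinearMap with hLdef
  have hL : ∀ w : ℂ, L w = ((w.re : ℝ) : ℍ[ℝ]) + w.im • J := by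
    intro w
    show φ w = _
    rw [Complex.liftAux_apply, Quaternion.algebraMap_def]
  have haJ : a • J = σ.im := by
    rw [hJdef, smul_smul, mul_inv_cancel₀ ha, one_smul]
  have hcoe : ∀ y : ℝ, (y : ℍ[ℝ]) = y • (1:ℍ[ℝ]) := fun y => by
    rw [← Quaternion.coe_one, ← Quaternion.coe_smul, smul_eq_mul, mul_one]
  have him_star : star σ.im = -σ.im := by ext <;> simp
  have hstar : star σ = (σ.re : ℍ[ℝ]) - σ.im := by
    conv_lhs => rw [← Quaternion.re_add_im σ]
    rw [star_add, Quaternion.star_coe, him_star, sub_eq_add_neg]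
  have hfL : ∀ x : ℝ,
      ((x ^ 2 + a ^ 2) ^ 2)⁻¹ • star ((x : ℍ[ℝ]) + σ.im) = L (Gm a 0 x) := by
    intro x
    rw [Gm_zero ha x, hL]
    have h1 : (((((x^2+a^2)^2)⁻¹ : ℝ) : ℂ) * qzOf x a).re = ((x^2+a^2)^2)⁻¹ * x := by
      rw [Complex.re_ofReal_mul]; simp [qzOf]
    have h2 : (((((x^2+a^2)^2)⁻¹ : ℝ) : ℂ) * qzOf x a).im = ((x^2+a^2)^2)⁻¹ * (-a) := by
      rw [Complex.im_ofReal_mul]; simp [qzOf]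
    rw [h1, h2, star_add, Quaternion.star_coe, him_star, hJdef, smul_smul,
      show ((x^2+a^2)^2)⁻¹ * (-a) * a⁻¹ = -((x^2+a^2)^2)⁻¹ by field_simp; try ring]
    rw [hcoe x, hcoe (((x^2+a^2)^2)⁻¹ * x)]
    module
  have main : ∀ (m : ℕ) (x : ℝ),
      iteratedDeriv m (fun x : ℝ => ((x ^ 2 + a ^ 2) ^ 2)⁻¹ • star ((x : ℍ[ℝ]) + σ.im)) x
        = L (Gm a m x) := by
    intro m
    induction m with
    | zero => intro x; rw [iteratedDeriv_zero]; exact hfL x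
    | succ m ih =>
      intro x
      rw [iteratedDeriv_succ, funext ih]
      exact (L.hasFDerivAt.comp_hasDerivAt x (hasDerivAt_Gm ha m x)).deriv
  have hLform : ∀ (C r1 r2 : ℝ),
      L ((C : ℂ) * ((r2 : ℂ) - (r1 : ℂ) * qzOf σ.re a)) = C • ((r2 : ℍ[ℝ]) - r1 • star σ) := by
    intro C r1 r2
    rw [hL]
    have h1 : ((C : ℂ) * ((r2 : ℂ) - (r1 : ℂ) * qzOf σ.re a)).re = C * (r2 - r1 * σ.re) := by
      rw [Complex.re_ofReal_mul]; simp [qzOf]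
    have h2 : ((C : ℂ) * ((r2 : ℂ) - (r1 : ℂ) * qzOf σ.re a)).im = C * (r1 * a) := by
      rw [Complex.im_ofReal_mul]; simp [qzOf]; try ring
    rw [h1, h2, hstar, hJdef, smul_smul,
      show C * (r1 * a) * a⁻¹ = C * r1 by field_simp; try ring]
    rw [hcoe (C * (r2 - r1 * σ.re)), hcoe r2, hcoe σ.re]
    module
  have hm : 2*n - 2 = 2*(n-2) + 2 := by omega
  have hm3 : 2*n - 3 = 2*(n-2) + 1 := by omega
  rw [hm, hm3, main (2*(n-2)+2) σ.re, key (n-2) σ.re a ha]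
  exact hLform _ _ _
end

section
/- Let n ≥ 2 and let K be the Cauchy–Szegő kernel on the quaternionic Heisenberg group 𝓗^{n−1}. Then there exists a constant C > 0 (depending only on n) such that for every g = (t,y) ∈ 𝓗^{n−1} with g ≠ 0, |K(g)| ≤ C·(|y|⁴ + |t|²)^{−(2n+1)/2}; that is, |K(g)| ≤ C·‖g‖^{−Q} with Q = 4n+2, where ‖(t,y)‖ = (|y|⁴ + |t|²)^{1/4} and |K(g)| is the quaternion norm. -/
open Quaternion
noncomputable section

/-- An element of the quaternionic Heisenberg group `𝓗^m = Im ℍ × ℍ^m`,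
modelled as a pair `(t, y)` with `t : ℍ` (required to be purely imaginary via
the hypothesis `t.re = 0` in the theorems below) and `y : Fin m → ℍ`. -/
abbrev QH (m : ℕ) := ℍ[ℝ] × (Fin m → ℍ[ℝ])

/-- The group product `(t,y)·(t',y') = (t + t' + 2 Im⟨y,y'⟩, y + y')`, where
`⟨y,y'⟩ = Σ_l conj(y_l)·y'_l`. -/
def qmul {m : ℕ} (g h : QH m) : QH m :=
  (g.1 + h.1 + 2 * (∑ l, star (g.2 l) * h.2 l).im, g.2 + h.2)

/-- The group inverse `(t,y)⁻¹ = (−t,−y)`. -/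
def qinv {m : ℕ} (g : QH m) : QH m := (-g.1, -g.2)

/-- The homogeneous norm `‖(t,y)‖ = (|y|⁴ + |t|²)^{1/4}`. -/
def hnorm {m : ℕ} (g : QH m) : ℝ :=
  ((∑ l, ‖g.2 l‖ ^ 2) ^ 2 + ‖g.1‖ ^ 2) ^ ((1 : ℝ) / 4)

/-- The quasi-distance `ρ(h,g) = ‖g⁻¹·h‖`. -/
def qdist {m : ℕ} (h g : QH m) : ℝ := hnorm (qmul (qinv g) h)

/-- The dilation `δ_r(t,y) = (r²t, ry)`. -/
def qdil {m : ℕ} (r : ℝ) (g : QH m) : QH m := ((r ^ 2 : ℝ) • g.1, r • g.2)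

/-- The normalized Cauchy–Szegő kernel density: `s(σ)` is the `(2n−2)`-nd
derivative at `x = Re σ` of `x ↦ conj(x + Im σ)·(x² + |Im σ|²)^{−2}`
(i.e. `∂^{2(n−1)}/∂x₁^{2(n−1)}[conj σ/|σ|⁴]` with `c_{n−1} = 1`). -/
def sker (n : ℕ) (σ : ℍ[ℝ]) : ℍ[ℝ] :=
  iteratedDeriv (2 * n - 2)
    (fun x : ℝ => ((x ^ 2 + ‖σ.im‖ ^ 2) ^ 2)⁻¹ • star ((x : ℍ[ℝ]) + σ.im)) σ.re

/-- The Cauchy–Szegő kernel `K(t,y) = s(|y|² + t)` on `𝓗^m`. -/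
def Kker (n : ℕ) {m : ℕ} (g : QH m) : ℍ[ℝ] :=
  sker n (((∑ l, ‖g.2 l‖ ^ 2 : ℝ) : ℍ[ℝ]) + g.1)


namespace KkerSizeAux

open Complex Finset

lemma iterated_zpow (k : ℤ) (w : ℂ) (m : ℕ) :
    ∀ x : ℝ, (x:ℂ) ≠ w → iteratedDeriv m (fun y : ℝ => ((y:ℂ) - w) ^ k) x =
      (∏ i ∈ Finset.range m, ((k : ℂ) - i)) * ((x:ℂ) - w) ^ (k - m) := by
  induction m with
  | zero => intro x hx; simp
  | succ m ih =>
    intro x hx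
    rw [iteratedDeriv_succ]
    have hopen : IsOpen {y : ℝ | (y:ℂ) ≠ w} :=
      isOpen_ne.preimage Complex.continuous_ofReal
    have hev : iteratedDeriv m (fun y : ℝ => ((y:ℂ) - w) ^ k) =ᶠ[nhds x]
        fun y : ℝ => (∏ i ∈ Finset.range m, ((k : ℂ) - i)) * ((y:ℂ) - w) ^ (k - (m:ℕ)) := by
      filter_upwards [hopen.mem_nhds hx] with y hy using ih y hy
    rw [hev.deriv_eq]
    have hz : (x:ℂ) - w ≠ 0 := sub_ne_zero.2 hx
    have h1 : HasDerivAt (fun z : ℂ => (z - w) ^ (k - (m:ℕ)))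
        ((((k - (m:ℕ) : ℤ)) : ℂ) * ((x:ℂ) - w) ^ (k - (m:ℕ) - 1) * 1) (x:ℂ) :=
      HasDerivAt.comp (x:ℂ) (hasDerivAt_zpow _ _ (Or.inl hz)) ((hasDerivAt_id (x:ℂ)).sub_const w)
    have h2 := (h1.comp_ofReal).const_mul (∏ i ∈ Finset.range m, ((k : ℂ) - i))
    refine h2.deriv.trans ?_
    rw [Finset.prod_range_succ]
    have hexp : k - (m:ℕ) - 1 = k - ((m+1 : ℕ):ℤ) := by push_cast; ring
    rw [hexp]
    push_cast
    ring

lemma key (m : ℕ) : ∃ C : ℝ, 0 < C ∧ ∀ (x₀ : ℝ) (c : ℍ[ℝ]),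
    x₀ ^ 2 + ‖c‖ ^ 2 ≠ 0 →
    ‖iteratedDeriv m (fun x : ℝ => ((x ^ 2 + ‖c‖ ^ 2) ^ 2)⁻¹ • ((x : ℍ[ℝ]) - c)) x₀‖ ≤
      C * Real.sqrt (x₀ ^ 2 + ‖c‖ ^ 2) ^ (-((m:ℤ) + 3)) := by
  set C₀ : ℝ := ∑ i ∈ Finset.range (m+1), (m.choose i : ℝ) *
      ‖∏ j ∈ Finset.range i, ((-1:ℂ) - j)‖ * ‖∏ j ∈ Finset.range (m-i), ((-2:ℂ) - j)‖ with hC₀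
  have hC₀0 : 0 ≤ C₀ := by positivity
  refine ⟨2 * C₀ + 1, by positivity, ?_⟩
  intro x₀ c hD
  set a : ℝ := ‖c‖ with ha
  have ha0 : 0 ≤ a := norm_nonneg c
  have hDpos : 0 < x₀ ^ 2 + a ^ 2 := lt_of_le_of_ne (by positivity) (Ne.symm hD)
  set R : ℝ := Real.sqrt (x₀ ^ 2 + a ^ 2) with hR
  have hRpos : 0 < R := Real.sqrt_pos.2 hDpos
  -- the embedding φ
  set u : ℍ[ℝ] := if a = 0 then 0 else a⁻¹ • c with hu
  have hau : a • u = c := by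
    by_cases h : a = 0
    · simp [hu, h]
      have : c = 0 := norm_eq_zero.1 (by rw [← ha, h])
      simp [this]
    · simp [hu, h, smul_smul, mul_inv_cancel₀ h]
  have hunorm : ‖u‖ ≤ 1 := by
    by_cases h : a = 0
    · simp [hu, h]
    · simp [hu, h, norm_smul]
      rw [_root_.abs_of_nonneg ha0, ← ha, inv_mul_cancel₀ h]
  set φ : ℂ →L[ℝ] ℍ[ℝ] := Complex.reCLM.smulRight (1:ℍ[ℝ]) + Complex.imCLM.smulRight u with hφ
  have hφ_apply : ∀ z : ℂ, φ z = z.re • (1:ℍ[ℝ]) + z.im • u := fun z => rfl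
  have hφ_le : ∀ z : ℂ, ‖φ z‖ ≤ 2 * ‖z‖ := by
    intro z
    rw [hφ_apply]
    calc ‖z.re • (1:ℍ[ℝ]) + z.im • u‖ ≤ ‖z.re • (1:ℍ[ℝ])‖ + ‖z.im • u‖ := norm_add_le _ _
    _ ≤ |z.re| * 1 + |z.im| * 1 := by
        gcongr
        · rw [norm_smul, Real.norm_eq_abs, norm_one]
        · rw [norm_smul, Real.norm_eq_abs]
          exact mul_le_mul_of_nonneg_left hunorm (abs_nonneg _)
    _ ≤ 2 * ‖z‖ := by
        have h1 := Complex.abs_re_le_norm z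
        have h2 := Complex.abs_im_le_norm z
        linarith
  set w : ℂ := (a:ℂ) * Complex.I with hw
  set g₁ : ℝ → ℂ := fun x => ((x:ℂ) - w)⁻¹ with hg₁
  set g₂ : ℝ → ℂ := fun x => (((x:ℂ) + w)^2)⁻¹ with hg₂
  set s : Set ℝ := {x : ℝ | x^2 + a^2 ≠ 0} with hsdef
  have hsopen : IsOpen s := by
    have hcont : Continuous fun x : ℝ => x^2 + a^2 := (continuous_pow 2).add continuous_const
    exact isOpen_compl_singleton.preimage hcont
  have hx₀s : x₀ ∈ s := hD
  have hmem : ∀ x : ℝ, x ∈ s → ((x:ℂ) - w ≠ 0 ∧ (x:ℂ) + w ≠ 0) := by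
    intro x hx
    have hxs : x^2 + a^2 ≠ 0 := hx
    constructor
    · intro hEq
      have h' : (x:ℂ) = w := by linear_combination hEq
      rw [hw, Complex.ext_iff] at h'
      simp at h'
      exact hxs (by rw [h'.1, ← h'.2]; ring)
    · intro hEq
      have h' : (x:ℂ) = -w := by linear_combination hEq
      rw [hw, Complex.ext_iff] at h'
      simp at h'
      exact hxs (by rw [h'.1, h'.2]; ring)
  have hkeyC : ∀ x : ℝ, x ∈ s →
      g₁ x * g₂ x = ((((x^2 + a^2 : ℝ) : ℂ))^2)⁻¹ * ((x:ℂ) - w) := by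
    intro x hx
    obtain ⟨h1, h2⟩ := hmem x hx
    have hprod : ((x:ℂ) - w) * ((x:ℂ) + w) = (((x^2 + a^2 : ℝ)) : ℂ) := by
      rw [hw]
      push_cast
      ring_nf
      rw [Complex.I_sq]
      ring
    rw [hg₁, hg₂, ← hprod]
    field_simp
  have hEqOn : Set.EqOn (fun x : ℝ => ((x ^ 2 + a ^ 2) ^ 2)⁻¹ • ((x : ℍ[ℝ]) - c))
      (φ ∘ fun x => g₁ x * g₂ x) s := by
    intro x hx
    have hC := hkeyC x hx
    simp only [Function.comp_apply, hC]
    have hcast : ((((x^2 + a^2 : ℝ) : ℂ))^2)⁻¹ = ((((x^2+a^2)^2)⁻¹ : ℝ) : ℂ) := by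
      push_cast; ring
    rw [hcast]
    set r : ℝ := ((x^2+a^2)^2)⁻¹ with hr
    have hre : (((r : ℝ):ℂ) * ((x:ℂ) - w)).re = r * x := by
      simp [hw]
    have him : (((r : ℝ):ℂ) * ((x:ℂ) - w)).im = r * (-a) := by
      simp [hw]
    rw [hφ_apply, hre, him]
    rw [← hau]
    have hx1 : ((x:ℝ) : ℍ[ℝ]) = x • (1:ℍ[ℝ]) := by ext <;> simp
    rw [hx1]
    module
  have hg₁cd : ContDiffOn ℝ m g₁ s := by
    intro x hx
    exact (((Complex.ofRealCLM.contDiff.sub contDiff_const).contDiffAt).inv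
      (hmem x hx).1).contDiffWithinAt
  have hg₂cd : ContDiffOn ℝ m g₂ s := by
    intro x hx
    exact ((((Complex.ofRealCLM.contDiff.add contDiff_const).pow 2).contDiffAt).inv
      (pow_ne_zero 2 (hmem x hx).2)).contDiffWithinAt
  have husc : UniqueDiffOn ℝ s := hsopen.uniqueDiffOn
  have step1 : ‖iteratedDeriv m (fun x : ℝ => ((x ^ 2 + a ^ 2) ^ 2)⁻¹ • ((x : ℍ[ℝ]) - c)) x₀‖
      = ‖iteratedFDerivWithin ℝ m (φ ∘ fun x => g₁ x * g₂ x) s x₀‖ := by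
    rw [← norm_iteratedFDeriv_eq_norm_iteratedDeriv,
      ← iteratedFDerivWithin_of_isOpen m hsopen hx₀s,
      iteratedFDerivWithin_congr hEqOn hx₀s]
  have step2 : ‖iteratedFDerivWithin ℝ m (φ ∘ fun x => g₁ x * g₂ x) s x₀‖ ≤
      2 * ‖iteratedFDerivWithin ℝ m (fun x => g₁ x * g₂ x) s x₀‖ := by
    rw [φ.iteratedFDerivWithin_comp_left ((hg₁cd.mul hg₂cd) x₀ hx₀s) husc hx₀s le_rfl]
    refine (ContinuousLinearMap.norm_compContinuousMultilinearMap_le _ _).trans ?_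
    gcongr
    exact φ.opNorm_le_bound (by norm_num) hφ_le
  have step3 : ‖iteratedFDerivWithin ℝ m (fun x => g₁ x * g₂ x) s x₀‖ ≤
      ∑ i ∈ Finset.range (m+1), (m.choose i : ℝ) * ‖iteratedFDerivWithin ℝ i g₁ s x₀‖ *
        ‖iteratedFDerivWithin ℝ (m-i) g₂ s x₀‖ :=
    norm_iteratedFDerivWithin_mul_le hg₁cd hg₂cd husc hx₀s le_rfl
  have hnw1 : ‖(x₀:ℂ) - w‖ = R := by
    have : (x₀:ℂ) - w = Complex.mk x₀ (-a) := by
      rw [hw, Complex.ext_iff]; constructor <;> simp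
    rw [this, Complex.norm_def, Complex.normSq_mk, hR]
    congr 1; ring
  have hnw2 : ‖(x₀:ℂ) - (-w)‖ = R := by
    have : (x₀:ℂ) - (-w) = Complex.mk x₀ a := by
      rw [hw, Complex.ext_iff]; constructor <;> simp
    rw [this, Complex.norm_def, Complex.normSq_mk, hR]
    congr 1; ring
  have hg1norm : ∀ i : ℕ, ‖iteratedFDerivWithin ℝ i g₁ s x₀‖ =
      ‖∏ j ∈ Finset.range i, ((-1:ℂ) - j)‖ * R ^ ((-1:ℤ) - (i:ℤ)) := by
    intro i
    rw [iteratedFDerivWithin_of_isOpen i hsopen hx₀s, norm_iteratedFDeriv_eq_norm_iteratedDeriv]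
    have hfun : g₁ = fun x : ℝ => ((x:ℂ) - w) ^ (-1:ℤ) := by
      funext x; rw [hg₁, zpow_neg_one]
    rw [hfun, iterated_zpow (-1) w i x₀ (sub_ne_zero.1 (hmem x₀ hx₀s).1),
      norm_mul, norm_zpow, hnw1]
    norm_num
  have hg2norm : ∀ i : ℕ, ‖iteratedFDerivWithin ℝ i g₂ s x₀‖ =
      ‖∏ j ∈ Finset.range i, ((-2:ℂ) - j)‖ * R ^ ((-2:ℤ) - (i:ℤ)) := by
    intro i
    rw [iteratedFDerivWithin_of_isOpen i hsopen hx₀s, norm_iteratedFDeriv_eq_norm_iteratedDeriv]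
    have hfun : g₂ = fun x : ℝ => ((x:ℂ) - (-w)) ^ (-2:ℤ) := by
      funext x
      rw [hg₂, sub_neg_eq_add, show ((-2:ℤ)) = -((2:ℕ):ℤ) from rfl, zpow_neg, zpow_natCast]
    have hne : (x₀:ℂ) ≠ -w := by
      intro hEq; exact (hmem x₀ hx₀s).2 (by rw [hEq]; ring)
    rw [hfun, iterated_zpow (-2) (-w) i x₀ hne, norm_mul, norm_zpow, hnw2]
    norm_num
  have hsum : ∑ i ∈ Finset.range (m+1), (m.choose i : ℝ) * ‖iteratedFDerivWithin ℝ i g₁ s x₀‖ *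
        ‖iteratedFDerivWithin ℝ (m-i) g₂ s x₀‖ = C₀ * R ^ (-((m:ℤ)+3)) := by
    rw [hC₀, Finset.sum_mul]
    refine Finset.sum_congr rfl fun i hi => ?_
    rw [hg1norm i, hg2norm (m-i)]
    have him : i ≤ m := Nat.lt_succ_iff.1 (Finset.mem_range.1 hi)
    have hcast : ((m - i : ℕ) : ℤ) = (m:ℤ) - i := by rw [Nat.cast_sub him]
    have he : ((-1:ℤ) - (i:ℤ)) + ((-2:ℤ) - ((m-i:ℕ):ℤ)) = -((m:ℤ)+3) := by
      rw [hcast]; ring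
    calc (m.choose i : ℝ) * (‖∏ j ∈ Finset.range i, ((-1:ℂ) - j)‖ * R ^ ((-1:ℤ) - (i:ℤ))) *
          (‖∏ j ∈ Finset.range (m-i), ((-2:ℂ) - j)‖ * R ^ ((-2:ℤ) - ((m-i:ℕ):ℤ)))
        = ((m.choose i : ℝ) * ‖∏ j ∈ Finset.range i, ((-1:ℂ) - j)‖ *
            ‖∏ j ∈ Finset.range (m-i), ((-2:ℂ) - j)‖) *
          (R ^ ((-1:ℤ) - (i:ℤ)) * R ^ ((-2:ℤ) - ((m-i:ℕ):ℤ))) := by ring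
      _ = _ := by rw [← zpow_add₀ (ne_of_gt hRpos), he]
  have hRpow : (0:ℝ) < R ^ (-((m:ℤ)+3)) := zpow_pos hRpos _
  calc ‖iteratedDeriv m (fun x : ℝ => ((x ^ 2 + a ^ 2) ^ 2)⁻¹ • ((x : ℍ[ℝ]) - c)) x₀‖
      ≤ 2 * (C₀ * R ^ (-((m:ℤ)+3))) := by
        rw [step1]
        refine step2.trans ?_
        have := step3.trans_eq hsum
        linarith
    _ ≤ (2 * C₀ + 1) * R ^ (-((m:ℤ)+3)) := by nlinarith

end KkerSizeAux

/-- Size estimate for the Cauchy–Szegő kernel: there is a constant `C > 0`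
(depending only on `n`) such that `|K(g)| ≤ C·(|y|⁴ + |t|²)^{−(2n+1)/2}`, i.e.
`|K(g)| ≤ C·‖g‖^{−Q}` with `Q = 4n+2`. -/
theorem Kker_size_estimate (n : ℕ) (hn : 2 ≤ n) :
    ∃ C : ℝ, 0 < C ∧ ∀ g : QH (n - 1), g.1.re = 0 → g ≠ 0 →
      ‖Kker n g‖ ≤
        C * (((∑ l, ‖g.2 l‖ ^ 2) ^ 2 + ‖g.1‖ ^ 2) ^ (-((2 * (n : ℝ) + 1) / 2))) := by
  obtain ⟨C, hC, hkey⟩ := KkerSizeAux.key (2 * n - 2)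
  refine ⟨C, hC, ?_⟩
  intro g hre hne
  have hS0 : 0 ≤ ∑ l, ‖g.2 l‖ ^ 2 := Finset.sum_nonneg fun l _ => sq_nonneg _
  have hD : (∑ l, ‖g.2 l‖ ^ 2) ^ 2 + ‖g.1‖ ^ 2 ≠ 0 := by
    intro h0
    have h1 : (∑ l, ‖g.2 l‖ ^ 2) = 0 := by
      nlinarith [sq_nonneg (∑ l, ‖g.2 l‖ ^ 2), sq_nonneg ‖g.1‖]
    have h2 : ‖g.1‖ = 0 := by nlinarith [sq_nonneg ‖g.1‖]
    apply hne
    have hg1 : g.1 = 0 := norm_eq_zero.1 h2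
    have hg2 : g.2 = 0 := by
      funext l
      have h3 : ∀ l ∈ Finset.univ, ‖g.2 l‖ ^ 2 = 0 :=
        (Finset.sum_eq_zero_iff_of_nonneg (fun l _ => sq_nonneg _)).1 h1
      have h4 : ‖g.2 l‖ = 0 := by
        have := h3 l (Finset.mem_univ l)
        nlinarith [norm_nonneg (g.2 l)]
      exact norm_eq_zero.1 h4
    have : g = ((0 : ℍ[ℝ]), (0 : Fin (n-1) → ℍ[ℝ])) := Prod.ext hg1 hg2
    exact this
  have hDpos : 0 < (∑ l, ‖g.2 l‖ ^ 2) ^ 2 + ‖g.1‖ ^ 2 :=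
    lt_of_le_of_ne (by positivity) (Ne.symm hD)
  have hKeq : Kker n g = iteratedDeriv (2 * n - 2)
      (fun x : ℝ => ((x ^ 2 + ‖g.1‖ ^ 2) ^ 2)⁻¹ • ((x : ℍ[ℝ]) - g.1)) (∑ l, ‖g.2 l‖ ^ 2) := by
    have hσre : ((((∑ l, ‖g.2 l‖ ^ 2 : ℝ)) : ℍ[ℝ]) + g.1).re = ∑ l, ‖g.2 l‖ ^ 2 := by
      simp [hre]
    have hσim : ((((∑ l, ‖g.2 l‖ ^ 2 : ℝ)) : ℍ[ℝ]) + g.1).im = g.1 := by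
      ext <;> simp [hre]
    unfold Kker sker
    rw [hσim, hσre]
    congr 1
    funext x
    congr 1
    ext <;> simp [hre]
  rw [hKeq]
  refine (hkey _ g.1 hD).trans ?_
  have hrpow : Real.sqrt ((∑ l, ‖g.2 l‖ ^ 2) ^ 2 + ‖g.1‖ ^ 2) ^ (-(((2*n-2 : ℕ) : ℤ) + 3)) =
      ((∑ l, ‖g.2 l‖ ^ 2) ^ 2 + ‖g.1‖ ^ 2) ^ (-((2 * (n:ℝ) + 1) / 2)) := by
    rw [Real.sqrt_eq_rpow, ← Real.rpow_intCast ((((∑ l, ‖g.2 l‖ ^ 2) ^ 2 + ‖g.1‖ ^ 2)) ^ ((1:ℝ)/2)) _,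
      ← Real.rpow_mul hDpos.le]
    congr 1
    have h : ((2*n-2 : ℕ) : ℤ) = 2*(n:ℤ) - 2 := by omega
    rw [h]
    push_cast
    ring
  rw [hrpow]
end
end

section
/- Let n ≥ 2. Then s(1 + 𝐢) ≠ 0; that is, the (2n−2)-nd derivative at x = 1 of the function ℝ → ℍ, x ↦ conj(x + 𝐢)·(x² + 1)^{−2}, is a nonzero quaternion. More precisely, up to a nonzero multiplicative constant it equals −((2n−2)!/(16𝐢))·(4/(2i)^{n})·(4n−1−i+(−1)^{n}(i+1)), and the complex number 4n−1−i+(−1)^{n}(i+1) is nonzero. -/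
open Quaternion
noncomputable section

/-- The quaternion imaginary unit `𝐢`. -/
def qi : ℍ[ℝ] := ⟨0, 1, 0, 0⟩

open Complex Finset

lemma qi_re : qi.re = 0 := rfl
lemma qi_imI : qi.imI = 1 := rfl
lemma qi_imJ : qi.imJ = 0 := rfl
lemma qi_imK : qi.imK = 0 := rfl

lemma qi_mul_qi : qi * qi = -1 := by ext <;> simp [qi_re, qi_imI, qi_imJ, qi_imK]

/-- The real-algebra embedding ℂ → ℍ sending I to qi. -/
def LL : ℂ →ₐ[ℝ] ℍ[ℝ] := Complex.liftAux qi qi_mul_qi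

lemma LL_I : LL Complex.I = qi := Complex.liftAux_apply_I _ _

lemma LL_ofReal (r : ℝ) : LL (r : ℂ) = (r : ℍ[ℝ]) := by
  simp [LL, Complex.liftAux_apply, Quaternion.algebraMap_def]

lemma LL_inj : Function.Injective LL := LL.toRingHom.injective

lemma norm_qi : ‖qi‖ = 1 := by
  have h : Quaternion.normSq qi = 1 := by simp [qi_re, qi_imI, qi_imJ, qi_imK, Quaternion.normSq_def']
  have h2 := Quaternion.normSq_eq_norm_mul_self qi
  nlinarith [norm_nonneg qi]

lemma star_qi : star qi = -qi := by ext <;> simp [qi_re, qi_imI, qi_imJ, qi_imK]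

/-- Continuous version of `LL`. -/
def Lc : ℂ →L[ℝ] ℍ[ℝ] :=
  { toLinearMap := LL.toLinearMap, cont := LL.toLinearMap.continuous_of_finiteDimensional }

lemma Lc_apply (z : ℂ) : Lc z = LL z := rfl

lemma key_hasDerivAt (a : ℂ) (ha : a.im ≠ 0) (k : ℤ) (x : ℝ) :
    HasDerivAt (fun x : ℝ => ((x:ℂ) + a) ^ k) (k * ((x:ℂ) + a) ^ (k-1)) x := by
  have hne : (x:ℂ) + a ≠ 0 := by
    intro h
    apply ha
    have := congrArg Complex.im h
    simpa using this
  have h2 : HasDerivAt (fun z : ℂ => z + a) 1 (x:ℂ) := (hasDerivAt_id _).add_const a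
  have h1 : HasDerivAt (fun z : ℂ => (z + a) ^ k) ((k : ℂ) * ((x:ℂ) + a) ^ (k-1)) (x:ℂ) := by
    have := (hasDerivAt_zpow k ((x:ℂ) + a) (Or.inl hne)).comp (x:ℂ) h2
    rw [mul_one] at this
    exact this
  exact h1.comp_ofReal

/-- Derivative-chain family for the partial-fraction decomposition of
`(x−i)/(x²+1)²`. -/
def DD (m : ℕ) : ℝ → ℂ := fun x =>
  (∏ j ∈ Finset.range m, (-1 - (j:ℂ))) * (-(4:ℂ))⁻¹ * ((x:ℂ) + (-I)) ^ (-1 - (m:ℤ))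
  + (∏ j ∈ Finset.range m, (-1 - (j:ℂ))) * (4:ℂ)⁻¹ * ((x:ℂ) + I) ^ (-1 - (m:ℤ))
  + (∏ j ∈ Finset.range m, (-2 - (j:ℂ))) * (I/2) * ((x:ℂ) + I) ^ (-2 - (m:ℤ))

lemma chainD (m : ℕ) (x : ℝ) : HasDerivAt (DD m) (DD (m+1) x) x := by
  have hnI : (-I).im ≠ 0 := by simp
  have hI : (I:ℂ).im ≠ 0 := by simp
  have h1 := ((key_hasDerivAt (-I) hnI (-1 - (m:ℤ)) x).const_mul
      ((∏ j ∈ Finset.range m, (-1 - (j:ℂ))) * (-(4:ℂ))⁻¹))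
  have h2 := ((key_hasDerivAt I hI (-1 - (m:ℤ)) x).const_mul
      ((∏ j ∈ Finset.range m, (-1 - (j:ℂ))) * (4:ℂ)⁻¹))
  have h3 := ((key_hasDerivAt I hI (-2 - (m:ℤ)) x).const_mul
      ((∏ j ∈ Finset.range m, (-2 - (j:ℂ))) * (I/2)))
  have h := (h1.add h2).add h3
  convert h using 1
  case e'_4 => rfl
  case e'_8 => rfl
  have e1 : (-1 - ((m:ℕ)+1 : ℕ) : ℤ) = (-1 - (m:ℤ)) - 1 := by push_cast; ring
  have e2 : (-2 - ((m:ℕ)+1 : ℕ) : ℤ) = (-2 - (m:ℤ)) - 1 := by push_cast; ring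
  simp only [DD, Finset.prod_range_succ, e1, e2]
  push_cast
  ring

lemma iteratedDeriv_chain {F : Type*} [NormedAddCommGroup F] [NormedSpace ℝ F]
    (E : ℕ → ℝ → F) (h : ∀ m x, HasDerivAt (E m) (E (m+1) x) x) :
    ∀ m, iteratedDeriv m (E 0) = E m := by
  intro m
  induction m with
  | zero => simp [iteratedDeriv_zero]
  | succ m ih =>
      rw [iteratedDeriv_succ, ih]
      funext x
      exact (h m x).deriv

/-- The quaternionic chain family. -/
def EE (m : ℕ) : ℝ → ℍ[ℝ] := fun x => Lc (DD m x)

lemma chainE (m : ℕ) (x : ℝ) : HasDerivAt (EE m) (EE (m+1) x) x :=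
  Lc.hasFDerivAt.comp_hasDerivAt x (chainD m x)


lemma E0_eq (x : ℝ) :
    EE 0 x = ((x ^ 2 + 1) ^ 2)⁻¹ • star ((x : ℍ[ℝ]) + qi) := by
  have h1 : ((x:ℂ) - I) ≠ 0 := by
    intro h; have := congrArg Complex.im h; simp at this
  have h2 : ((x:ℂ) + I) ≠ 0 := by
    intro h; have := congrArg Complex.im h; simp at this
  have hf : ((x:ℂ)^2 + 1) = ((x:ℂ) - I) * ((x:ℂ) + I) := by
    linear_combination Complex.I_sq
  have hD : DD 0 x = ((((x^2 + 1)^2 : ℝ))⁻¹ : ℝ) • ((x:ℂ) - I) := by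
    simp only [DD, Finset.prod_range_zero, one_mul, Nat.cast_zero]
    have e1 : (-1 - (0:ℤ)) = (-1 : ℤ) := by norm_num
    have e2 : (-2 - (0:ℤ)) = -(2 : ℤ) := by norm_num
    rw [e1, e2, Complex.real_smul]
    push_cast
    rw [hf]
    simp only [zpow_neg, zpow_one, zpow_two]
    have hx : (x:ℂ) + -I = (x:ℂ) - I := by ring
    rw [hx]
    field_simp
    ring_nf
    linear_combination (-8 : ℂ) * Complex.I_sq
  have hstar : star ((x : ℍ[ℝ]) + qi) = (x : ℍ[ℝ]) - qi := by
    rw [star_add, star_qi, Quaternion.star_coe, sub_eq_add_neg]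
  rw [hstar, EE, Lc_apply, hD, map_smul]
  congr 1
  rw [map_sub, LL_I]
  congr 1
  exact LL_ofReal x

lemma prod_neg_one (m : ℕ) :
    ∏ j ∈ Finset.range m, (-1 - (j:ℂ)) = (-1)^m * (m.factorial : ℂ) := by
  induction m with
  | zero => simp
  | succ m ih =>
      rw [Finset.prod_range_succ, ih]
      push_cast [Nat.factorial_succ, pow_succ]
      ring

lemma prod_neg_two (m : ℕ) :
    ∏ j ∈ Finset.range m, (-2 - (j:ℂ)) = (-1)^m * ((m+1).factorial : ℂ) := by
  induction m with
  | zero => simp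
  | succ m ih =>
      rw [Finset.prod_range_succ, ih]
      push_cast [Nat.factorial_succ, pow_succ]
      ring
lemma core (K P F : ℂ) (hP : P ≠ 0) (t : ℂ) (ht : t = 1 ∨ t = -1) :
    F * (-(4:ℂ))⁻¹ * (t * P * (1-I))⁻¹ + F * (4:ℂ)⁻¹ * (P * (1+I))⁻¹
      + ((2*K+1) * F) * (I/2) * (P * (2*I))⁻¹
    = -(F/(16*I)) * (4/(P * (2*I))) * (4*(K+1) - 1 - I + (-t) * (I+1)) := by
  have i1 : ((1:ℂ)-I)⁻¹ = (1+I)/2 := by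
    rw [inv_eq_of_mul_eq_one_right]
    linear_combination (-1/2 : ℂ) * Complex.I_sq
  have i2 : ((1:ℂ)+I)⁻¹ = (1-I)/2 := by
    rw [inv_eq_of_mul_eq_one_right]
    linear_combination (-1/2 : ℂ) * Complex.I_sq
  have i3 : (I:ℂ)⁻¹ = -I := Complex.inv_I
  rcases ht with ht | ht <;> subst ht <;>
    simp only [mul_inv, i1, i2, i3, div_eq_mul_inv] <;> ring_nf
  · linear_combination (- F*P⁻¹*I/4) * Complex.I_sq
  · linear_combination (F*P⁻¹/4) * Complex.I_sq

lemma pow_two_I_add : ((1:ℂ)+I)^2 = 2*I := by linear_combination Complex.I_sq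
lemma pow_two_I_sub : ((1:ℂ)-I)^2 = -2*I := by linear_combination Complex.I_sq

lemma hz2' (k : ℕ) : ((1:ℂ)+I)^(-1 - ((2*k:ℕ):ℤ)) = ((2*I)^k * (1+I))⁻¹ := by
  have e : (-1 - ((2*k:ℕ):ℤ)) = -((2*k+1 : ℕ):ℤ) := by push_cast; ring
  rw [e, zpow_neg, zpow_natCast]
  congr 1
  rw [pow_succ, pow_mul, pow_two_I_add]

lemma hz1' (k : ℕ) : ((1:ℂ)+(-I))^(-1 - ((2*k:ℕ):ℤ)) = ((-1:ℂ)^k * (2*I)^k * (1-I))⁻¹ := by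
  have e : (-1 - ((2*k:ℕ):ℤ)) = -((2*k+1 : ℕ):ℤ) := by push_cast; ring
  rw [show ((1:ℂ)+(-I)) = 1 - I by ring, e, zpow_neg, zpow_natCast]
  congr 1
  rw [pow_succ, pow_mul, pow_two_I_sub]
  rw [show ((-2:ℂ)*I) = -1 * (2*I) by ring, mul_pow]

lemma hz3' (k : ℕ) : ((1:ℂ)+I)^(-2 - ((2*k:ℕ):ℤ)) = ((2*I)^k * (2*I))⁻¹ := by
  have e : (-2 - ((2*k:ℕ):ℤ)) = -((2*(k+1) : ℕ):ℤ) := by push_cast; ring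
  rw [e, zpow_neg, zpow_natCast]
  congr 1
  rw [pow_mul, pow_two_I_add, pow_succ]

lemma neg_one_pow_two_mul (k : ℕ) : ((-1:ℂ))^(2*k) = 1 := by
  rw [pow_mul]; norm_num

lemma DD_val (k : ℕ) :
    DD (2*k) 1 = -((((2*k).factorial : ℂ))/(16*I)) * (4/((2*I)^(k+1)))
      * (4*((k:ℂ)+1) - 1 - I + (-1)^(k+1) * (I+1)) := by
  have ht : ((-1:ℂ))^k = 1 ∨ ((-1:ℂ))^k = -1 :=
    (Nat.even_or_odd k).imp (fun h => h.neg_one_pow) (fun h => h.neg_one_pow)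
  have step1 : DD (2*k) 1
      = (((2*k).factorial : ℂ)) * (-(4:ℂ))⁻¹ * (((-1:ℂ))^k * (2*I)^k * (1-I))⁻¹
        + (((2*k).factorial : ℂ)) * (4:ℂ)⁻¹ * ((2*I)^k * (1+I))⁻¹
        + ((2*(k:ℂ)+1) * (((2*k).factorial : ℂ))) * (I/2) * ((2*I)^k * (2*I))⁻¹ := by
    simp only [DD, Complex.ofReal_one, prod_neg_one, prod_neg_two, hz1', hz2', hz3',
      neg_one_pow_two_mul, one_mul]
    have : (((2*k+1).factorial : ℂ)) = (2*(k:ℂ)+1) * (((2*k).factorial : ℂ)) := by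
      rw [Nat.factorial_succ]; push_cast; ring
    rw [this]
  rw [step1, core (k:ℂ) ((2*I)^k) _ (pow_ne_zero _ (by simp [Complex.ext_iff])) _ ht]
  rw [pow_succ (2*I:ℂ) k, pow_succ (-1:ℂ) k]
  ring

/-- Nonvanishing of the Cauchy–Szegő kernel density at `σ = 1 + 𝐢` (Step 1 of
the lower-bound theorem): `s(1+𝐢) ≠ 0`; more precisely, up to a nonzero real
multiplicative constant it equals
`−((2n−2)!/(16𝐢))·(4/(2𝐢)^n)·(4n−1−𝐢+(−1)^n(𝐢+1))`, and the complex number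
`4n−1−i+(−1)^n(i+1)` is nonzero. -/
theorem sker_one_add_i_ne_zero (n : ℕ) (hn : 2 ≤ n) :
    sker n (1 + qi) ≠ 0
    ∧ (∃ c : ℝ, c ≠ 0 ∧
        sker n (1 + qi) =
          c • (-((((2 * n - 2).factorial : ℝ) : ℍ[ℝ]) / (16 * qi))
            * (4 / (2 * qi) ^ n)
            * (((4 * (n : ℝ) - 1 : ℝ) : ℍ[ℝ]) - qi + (-1 : ℍ[ℝ]) ^ n * (qi + 1))))
    ∧ (4 * (n : ℂ) - 1 - Complex.I + (-1 : ℂ) ^ n * (Complex.I + 1)) ≠ 0 := by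
  obtain ⟨k, rfl⟩ : ∃ k, n = k + 1 := ⟨n - 1, by omega⟩
  have hm : 2 * (k + 1) - 2 = 2 * k := by omega
  have him : (1 + qi).im = qi := by ext <;> simp [qi_re, qi_imI, qi_imJ, qi_imK]
  have hre : (1 + qi).re = 1 := by simp [qi_re, qi_imI, qi_imJ, qi_imK]
  have hfun : (fun x : ℝ => ((x ^ 2 + ‖(1+qi).im‖ ^ 2) ^ 2)⁻¹ • star ((x : ℍ[ℝ]) + (1+qi).im))
      = EE 0 := by
    funext x
    rw [him, norm_qi, one_pow]
    exact (E0_eq x).symm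
  have hsker : sker (k+1) (1 + qi) = Lc (DD (2*k) 1) := by
    rw [sker, hfun, hre, hm, iteratedDeriv_chain EE chainE]
    rfl
  have hbig : (4*((k:ℂ)+1) - 1 - I + (-1:ℂ)^(k+1) * (I+1)) ≠ 0 := by
    rcases Nat.even_or_odd (k+1) with h | h
    · rw [h.neg_one_pow]
      intro hc
      have := congrArg Complex.re hc
      push_cast at this
      simp at this
      linarith [Nat.cast_nonneg (α := ℝ) k]
    · rw [h.neg_one_pow]
      intro hc
      have := congrArg Complex.re hc
      push_cast at this
      simp at this
      linarith [Nat.cast_nonneg (α := ℝ) k]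
  have hRHSC : -((((2*k).factorial : ℂ))/(16*I)) * (4/((2*I)^(k+1)))
      * (4*((k:ℂ)+1) - 1 - I + (-1)^(k+1) * (I+1)) ≠ 0 := by
    apply mul_ne_zero (mul_ne_zero ?_ ?_) hbig
    · apply neg_ne_zero.2
      apply div_ne_zero
      · exact_mod_cast Nat.cast_ne_zero.2 (Nat.factorial_ne_zero _)
      · intro hc
        have := congrArg Complex.im hc
        simp at this
    · apply div_ne_zero (by norm_num)
      exact pow_ne_zero _ (by simp [Complex.ext_iff])
  have hval : sker (k+1) (1 + qi)
      = LL (-((((2*k).factorial : ℂ))/(16*I)) * (4/((2*I)^(k+1)))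
          * (4*((k:ℂ)+1) - 1 - I + (-1)^(k+1) * (I+1))) := by
    rw [hsker, Lc_apply, DD_val]
  refine ⟨?_, ⟨1, one_ne_zero, ?_⟩, ?_⟩
  · rw [hval]
    intro h
    exact hRHSC (LL_inj (h.trans (map_zero LL).symm))
  · rw [hval, one_smul, hm]
    simp only [map_mul, map_neg, map_div₀, map_add, map_sub, map_pow, map_one,
      map_ofNat, map_natCast, LL_I]
    push_cast
    norm_cast
  · intro hc
    apply hbig
    rw [← hc]
    push_cast
    ring
end
end
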